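/- arXiv:2410.17872 — 3 statements merged into one kernel-verified Lean document; each statement's English description precedes it below -/
import Mathlib

section
/- For every f ∈ O^c_{h1} ∩ O^c_{h2} and every g ∈ O_{h1}∖O_{h2}∖D, the coefficient ⟨(A,b)·f⟩_g depends only on the free parameters of (A,b) associated with O_{h2}∖O_{h1}∖D: if (A,b), (A′,b′) ∈ LTA(n,2)_{h2}^{h1} have equal values on all entries associated with O_{h2}∖O_{h1}∖D in the definition of the subgroup, then ⟨(A,b)·f⟩_g = ⟨(A′,b′)·f⟩_g. -/
open Finset

/-! Common setup: `R_n = F_2[x_0,…,x_{n−1}]/(x_i^2 − x_i)`.  A (squarefree) monomial is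
identified with its index set `ind(g) ⊆ {0,…,n−1}`.  Reduced elements of `R_n` are
identified, via the (bijective) evaluation map `ev`, with Boolean functions
`F_2^n → F_2`, i.e. with vectors in `F_2^N` indexed by the points of `F_2^n`. -/

/-- Monomials of `M_n`, identified with their index sets. -/
abbrev Mon (n : ℕ) := Finset (Fin n)

/-- Points of `F_2^n`. -/
abbrev Pt (n : ℕ) := Fin n → ZMod 2

/-- Elements of `R_n` (equivalently, vectors of `F_2^N`), identified with Boolean
functions via the evaluation map `ev`. -/
abbrev BF (n : ℕ) := Pt n → ZMod 2

variable {n : ℕ}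

/-- `ev` of the monomial `∏_{i ∈ S} x_i`. -/
def evm (S : Mon n) : BF n := fun x => ∏ i ∈ S, x i

/-- The coefficient `⟨f⟩_S` of the monomial `S` in the reduced polynomial represented by
the Boolean function `f` (binary Möbius inversion: `⟨f⟩_S = ∑_{supp x ⊆ S} f(x)`). -/
def mcoeff (f : BF n) (S : Mon n) : ZMod 2 :=
  ∑ x ∈ Finset.univ.filter (fun x : Pt n => ∀ i ∉ S, x i = 0), f x

/-- The row index `[g] = ∑_{i ∉ ind(g)} 2^i` of a monomial. -/
def rowIdx (S : Mon n) : ℕ := ∑ i ∈ Sᶜ, 2 ^ (i : ℕ)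

/-- `Ovd h g` means `h ≺_o g`: `h` is a one-variable descendant of `g`, i.e. `g = h·x_i`
for some `i ∉ ind(h)`, or `g = q·x_i`, `h = q·x_j` for a monomial `q` and `j < i`. -/
def Ovd (h g : Mon n) : Prop :=
  (∃ i ∉ h, g = insert i h) ∨
  (∃ (q : Mon n) (i j : Fin n), i ∉ q ∧ j ∉ q ∧ j < i ∧ g = insert i q ∧ h = insert j q)

/-- The standard partial order `≼` on monomials: `g ≼ h` iff some divisor `h'` of `h` with
`deg h' = deg g` dominates `g` coordinatewise after sorting the index lists increasingly. -/
def MonLE (g h : Mon n) : Prop :=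
  ∃ h' ⊆ h, h'.card = g.card ∧
    List.Forall₂ (· ≤ ·) (Finset.sort g (· ≤ ·)) (Finset.sort h' (· ≤ ·))

/-- `C(I)` is a decreasing monomial code. -/
def DecMonCode (I : Set (Mon n)) : Prop := ∀ h ∈ I, ∀ g, MonLE g h → g ∈ I

/-- The monomial code `C(I)`: the `F_2`-span of `{ev(g) : g ∈ I}`. -/
def code (I : Set (Mon n)) : Set (BF n) := ↑(Submodule.span (ZMod 2) (evm '' I))

/-- An element `(A,b)` of `LTA(n,2)`: `A` lower triangular with unit diagonal. -/
structure LTA (n : ℕ) where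
  A : Matrix (Fin n) (Fin n) (ZMod 2)
  b : Pt n
  diag : ∀ i, A i i = 1
  lower : ∀ i j : Fin n, i < j → A i j = 0

/-- The affine map `x ↦ Ax + b` on points. -/
def LTA.actPt (L : LTA n) (x : Pt n) : Pt n := L.A.mulVec x + L.b

/-- The action of `(A,b)` on `R_n` (equivalently on `F_2^N`):
`((A,b)·f)(x) = f(Ax+b)`, so that `(A,b)·ev(f) = ev((A,b)·f)`. -/
def LTA.act (L : LTA n) (f : BF n) : BF n := fun x => f (L.actPt x)

/-- Hamming weight. -/
def wt (f : BF n) : ℕ := (Finset.univ.filter (fun x => f x ≠ 0)).card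

/-- Weight distribution of a set of vectors: `d ↦ |{x ∈ S : wt x = d}|`. -/
noncomputable def wdist (S : Set (BF n)) : ℕ → ℕ := fun d => Nat.card {x : BF n // x ∈ S ∧ wt x = d}

/-- Membership in the subgroup `LTA(n,2)_{h2}^{h1}`: all strictly-lower-triangular entries of
`A` and all entries of `b` vanish except possibly the free parameters: for
`f ∈ O_{h1}∖O_{h2}∖D`, the entry `a_{s,t}` when `h1 = q·x_s`, `f = q·x_t`, `t < s`, and the
entry `b_r` when `h1 = f·x_r`; for `f ∈ O_{h2}∖O_{h1}∖D`, the entry `a_{s,t}` when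
`h2 = q·x_s`, `f = q·x_t`, `t < s`, and the entry `b_r` when `h2 = f·x_r`. -/
def InSub (h1 h2 : Mon n) (O1 O2 D : Set (Mon n)) (L : LTA n) : Prop :=
  (∀ s t : Fin n, t < s → L.A s t ≠ 0 →
    (∃ f ∈ ((O1 \ O2) \ D), ∃ q : Mon n, s ∉ q ∧ t ∉ q ∧ h1 = insert s q ∧ f = insert t q) ∨
    (∃ f ∈ ((O2 \ O1) \ D), ∃ q : Mon n, s ∉ q ∧ t ∉ q ∧ h2 = insert s q ∧ f = insert t q)) ∧
  (∀ r : Fin n, L.b r ≠ 0 →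
    (∃ f ∈ ((O1 \ O2) \ D), r ∉ f ∧ h1 = insert r f) ∨
    (∃ f ∈ ((O2 \ O1) \ D), r ∉ f ∧ h2 = insert r f))

/-- The standing context: a decreasing monomial code `C(I)` with `n ≥ 1`, last frozen index
`τ = max F` where `F = {0,…,N−1} ∖ {[g] : g ∈ I}`; `h1` the monomial of `I` of smallest row
index; `h2` the monomial of `I` of smallest row index among those with `[h1] < [h2]` that are
not one-variable descendants of `h1`; and the feasibility assumption
`|ind(h1)∖ind(h2)| ≤ 2`, `|ind(h2)∖ind(h1)| ≤ 2`. -/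
structure Setup (n : ℕ) where
  npos : 1 ≤ n
  I : Set (Mon n)
  dec : DecMonCode I
  τ : ℕ
  τlt : τ < 2 ^ n
  τfrozen : τ ∉ rowIdx '' I
  τmax : ∀ m < 2 ^ n, m ∉ rowIdx '' I → m ≤ τ
  h1 : Mon n
  h1mem : h1 ∈ I
  h1min : ∀ g ∈ I, rowIdx h1 ≤ rowIdx g
  h2 : Mon n
  h2mem : h2 ∈ I
  h12 : rowIdx h1 < rowIdx h2
  h2novd : ¬ Ovd h2 h1
  h2min : ∀ g ∈ I, rowIdx h1 < rowIdx g → ¬ Ovd g h1 → rowIdx h2 ≤ rowIdx g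
  feas1 : (h1 \ h2).card ≤ 2
  feas2 : (h2 \ h1).card ≤ 2

namespace Setup

variable (C : Setup n)

/-- `O_{h1} = {f ∈ I : f ≺_o h1, [h2] < [f] < τ}`. -/
def O1 : Set (Mon n) := {f | f ∈ C.I ∧ Ovd f C.h1 ∧ rowIdx C.h2 < rowIdx f ∧ rowIdx f < C.τ}

/-- `O_{h2} = {f ∈ I : f ≺_o h2, [f] < τ}`. -/
def O2 : Set (Mon n) := {f | f ∈ C.I ∧ Ovd f C.h2 ∧ rowIdx f < C.τ}

/-- `O^c_{h1} = {f ∈ I : f ∉ O_{h1}, [h2] < [f] < τ}`. -/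
def O1c : Set (Mon n) := {f | f ∈ C.I ∧ f ∉ C.O1 ∧ rowIdx C.h2 < rowIdx f ∧ rowIdx f < C.τ}

/-- `O^c_{h2} = {f ∈ I : f ∉ O_{h2}, [h2] < [f] < τ}`. -/
def O2c : Set (Mon n) := {f | f ∈ C.I ∧ f ∉ C.O2 ∧ rowIdx C.h2 < rowIdx f ∧ rowIdx f < C.τ}

/-- `D = {f ∈ O_{h1} ∪ O_{h2} : ∏_{j ∈ ind(h1)∩ind(h2)} x_j ∤ f}`. -/
def D : Set (Mon n) := {f | f ∈ C.O1 ∪ C.O2 ∧ ¬ (C.h1 ∩ C.h2 ⊆ f)}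

/-- `T = {f ∈ I : [f] > τ}`. -/
def T : Set (Mon n) := {f | f ∈ C.I ∧ C.τ < rowIdx f}

/-- `B = ((O_{h2}∖O_{h1}) ∩ D) ∪ (O^c_{h1} ∩ O^c_{h2}) ∪ T`. -/
def B : Set (Mon n) := ((C.O2 \ C.O1) ∩ C.D) ∪ (C.O1c ∩ C.O2c) ∪ C.T

/-- `(A,b) ∈ LTA(n,2)_{h2}^{h1}`. -/
def Mem (L : LTA n) : Prop := InSub C.h1 C.h2 C.O1 C.O2 C.D L

/-- `W = {g ∈ O^c_{h1} ∩ O^c_{h2} : ∃ (A,b) ∈ LTA(n,2)_{h2}^{h1}, ∃ p ∈ O_{h1}∖O_{h2}∖D,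
⟨(A,b)·g⟩_p ≠ 0}`. -/
def W : Set (Mon n) :=
  {g | g ∈ C.O1c ∩ C.O2c ∧
    ∃ L : LTA n, C.Mem L ∧ ∃ p ∈ ((C.O1 \ C.O2) \ C.D), mcoeff (L.act (evm g)) p ≠ 0}

/-- `L` and `L'` have equal values on all entries associated with `O_{h2}∖O_{h1}∖D`
in the definition of the subgroup `LTA(n,2)_{h2}^{h1}`. -/
def agreeO2 (L L' : LTA n) : Prop :=
  (∀ f ∈ ((C.O2 \ C.O1) \ C.D), ∀ (q : Mon n) (s t : Fin n),
      s ∉ q → t ∉ q → t < s → C.h2 = insert s q → f = insert t q → L.A s t = L'.A s t) ∧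
  (∀ f ∈ ((C.O2 \ C.O1) \ C.D), ∀ r : Fin n, r ∉ f → C.h2 = insert r f → L.b r = L'.b r)

end Setup

/-! ### Auxiliary development for `stmt12` -/

namespace Stmt12Aux

variable {n : ℕ}

/-- Weight sum of a monomial. -/
def wsum (S : Mon n) : ℕ := ∑ i ∈ S, 2 ^ (i : ℕ)

lemma rowIdx_add_wsum (S : Mon n) : rowIdx S + wsum S = ∑ i : Fin n, 2 ^ (i : ℕ) :=
  Finset.sum_compl_add_sum S _

lemma rowIdx_lt_iff {S T : Mon n} : rowIdx S < rowIdx T ↔ wsum T < wsum S := by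
  have h1 := rowIdx_add_wsum S
  have h2 := rowIdx_add_wsum T
  omega

lemma rowIdx_le_of_subset {S T : Mon n} (h : S ⊆ T) : rowIdx T ≤ rowIdx S := by
  have h1 := rowIdx_add_wsum S
  have h2 := rowIdx_add_wsum T
  have h3 : wsum S ≤ wsum T :=
    Finset.sum_le_sum_of_subset h
  omega

lemma wsum_insert {S : Mon n} {a : Fin n} (h : a ∉ S) :
    wsum (insert a S) = 2 ^ (a : ℕ) + wsum S := Finset.sum_insert h

lemma two_pow_lt {a b : Fin n} (h : a < b) : (2 : ℕ) ^ (a : ℕ) < 2 ^ (b : ℕ) :=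
  Nat.pow_lt_pow_right (by norm_num) h

/-! ### Products of boolean variables -/

lemma prod_union_idem (x : Pt n) (A B : Mon n) :
    (∏ k ∈ A, x k) * ∏ k ∈ B, x k = ∏ k ∈ A ∪ B, x k := by
  have hsq : ∀ a : ZMod 2, a * a = a := by decide
  have h1 : ((∏ k ∈ A ∪ B, x k) * ∏ k ∈ A ∩ B, x k) = (∏ k ∈ A, x k) * ∏ k ∈ B, x k :=
    Finset.prod_union_inter
  have hsub : A ∩ B ⊆ A ∪ B := (Finset.inter_subset_left).trans Finset.subset_union_left
  have h2 : (∏ k ∈ (A ∪ B) \ (A ∩ B), x k) * ∏ k ∈ A ∩ B, x k = ∏ k ∈ A ∪ B, x k :=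
    Finset.prod_sdiff hsub
  calc (∏ k ∈ A, x k) * ∏ k ∈ B, x k
      = (∏ k ∈ A ∪ B, x k) * ∏ k ∈ A ∩ B, x k := h1.symm
    _ = ((∏ k ∈ (A ∪ B) \ (A ∩ B), x k) * ∏ k ∈ A ∩ B, x k) * ∏ k ∈ A ∩ B, x k := by
        rw [h2]
    _ = (∏ k ∈ (A ∪ B) \ (A ∩ B), x k) * ((∏ k ∈ A ∩ B, x k) * ∏ k ∈ A ∩ B, x k) := by
        ring
    _ = (∏ k ∈ (A ∪ B) \ (A ∩ B), x k) * ∏ k ∈ A ∩ B, x k := by rw [hsq]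
    _ = ∏ k ∈ A ∪ B, x k := h2

lemma prod_biUnion_idem {ι : Type*} [DecidableEq ι] (x : Pt n) (s : Finset ι)
    (S : ι → Finset (Fin n)) :
    ∏ i ∈ s, ∏ k ∈ S i, x k = ∏ k ∈ s.biUnion S, x k := by
  classical
  induction s using Finset.induction_on with
  | empty => simp
  | insert a s h ih =>
      rw [Finset.prod_insert h, ih, Finset.biUnion_insert, prod_union_idem]

/-! ### `mcoeff` of a monomial -/

lemma mcoeff_evm (S g : Mon n) : mcoeff (evm S) g = if S = g then 1 else 0 := by
  classical
  by_cases hSg : S ⊆ g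
  · by_cases hE : S = g
    · subst hE
      rw [if_pos rfl]
      unfold mcoeff
      rw [Finset.sum_eq_single (fun i => if i ∈ S then (1 : ZMod 2) else 0)]
      · unfold evm
        rw [Finset.prod_congr rfl (fun i hi => if_pos hi), Finset.prod_const_one]
      · intro x hx hne
        have hzero : ∃ i ∈ S, x i = 0 := by
          by_contra hcon
          push_neg at hcon
          apply hne
          funext i
          by_cases hiS : i ∈ S
          · have h1 := hcon i hiS
            have : x i = 1 := by
              revert h1; generalize x i = a; revert a; decide
            rw [this, if_pos hiS]
          · rw [if_neg hiS]
            exact (Finset.mem_filter.1 hx).2 i hiS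
        obtain ⟨i, hiS, hxi⟩ := hzero
        exact Finset.prod_eq_zero hiS hxi
      · intro hmem
        exfalso
        apply hmem
        simp only [Finset.mem_filter, Finset.mem_univ, true_and]
        intro i hi
        rw [if_neg hi]
    · rw [if_neg hE]
      obtain ⟨i0, hi0g, hi0S⟩ := Finset.exists_of_ssubset (ssubset_of_subset_of_ne hSg hE)
      unfold mcoeff
      have haddself : ∀ a : ZMod 2, a + a = 0 := by decide
      have haddone : ∀ a : ZMod 2, a + 1 ≠ a := by decide
      apply Finset.sum_involution (g := fun x _ => Function.update x i0 (x i0 + 1))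
      · intro x hx
        have : evm S (Function.update x i0 (x i0 + 1)) = evm S x := by
          unfold evm
          refine Finset.prod_congr rfl fun i hi => ?_
          exact Function.update_of_ne (fun (h : i = i0) => hi0S (h ▸ hi)) _ x
        rw [this]
        exact haddself _
      · intro x hx _
        intro heq
        have := congrFun heq i0
        rw [Function.update_self] at this
        exact haddone _ this
      · intro x hx
        funext i
        by_cases hii : i = i0
        · subst hii
          simp only [Function.update_self]
          generalize x i = a
          revert a
          decide
        · rw [Function.update_of_ne hii, Function.update_of_ne hii]
      · intro x hx
        simp only [Finset.mem_filter, Finset.mem_univ, true_and]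
        intro i hig
        rw [Function.update_of_ne (fun (h : i = i0) => hig (h ▸ hi0g)) _ x]
        exact (Finset.mem_filter.1 hx).2 i hig
  · rw [if_neg (by rintro rfl; exact hSg Finset.Subset.rfl)]
    unfold mcoeff
    apply Finset.sum_eq_zero
    intro x hx
    obtain ⟨i, hiS, hig⟩ := Finset.not_subset.1 hSg
    exact Finset.prod_eq_zero hiS ((Finset.mem_filter.1 hx).2 i hig)

/-! ### Expansion of the action into selections -/

/-- Coefficient of the option `o` in the affine form of row `i`. -/
def lcoef (L : LTA n) (i : Fin n) : Option (Fin n) → ZMod 2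
  | some j => L.A i j
  | none => L.b i

/-- Variable set of an option. -/
def oset : Option (Fin n) → Mon n
  | some j => {j}
  | none => ∅

/-- Union of the chosen variables of a selection. -/
def Usel (f : Mon n) (c : ∀ a ∈ f, Option (Fin n)) : Mon n :=
  f.attach.biUnion fun i => oset (c i.1 i.2)

lemma linform (L : LTA n) (i : Fin n) (x : Pt n) :
    L.actPt x i = ∑ o : Option (Fin n), lcoef L i o * ∏ k ∈ oset o, x k := by
  rw [Fintype.sum_option]
  simp only [lcoef, oset, Finset.prod_empty, mul_one, Finset.prod_singleton]
  show (L.A.mulVec x + L.b) i = L.b i + ∑ j : Fin n, L.A i j * x j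
  simp only [Pi.add_apply, Matrix.mulVec, dotProduct]
  ring

lemma mcoeff_act (L : LTA n) (f g : Mon n) :
    mcoeff (L.act (evm f)) g =
      ∑ c ∈ f.pi fun _ => (Finset.univ : Finset (Option (Fin n))),
        (∏ i ∈ f.attach, lcoef L i.1 (c i.1 i.2)) * (if Usel f c = g then 1 else 0) := by
  classical
  have step1 : ∀ x : Pt n, L.act (evm f) x
      = ∑ c ∈ f.pi fun _ => (Finset.univ : Finset (Option (Fin n))),
          (∏ i ∈ f.attach, lcoef L i.1 (c i.1 i.2)) * evm (Usel f c) x := by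
    intro x
    have h1 : L.act (evm f) x
        = ∏ i ∈ f, ∑ o ∈ (Finset.univ : Finset (Option (Fin n))),
            lcoef L i o * ∏ k ∈ oset o, x k := by
      unfold LTA.act evm
      exact Finset.prod_congr rfl fun i _ => linform L i x
    rw [h1, Finset.prod_sum]
    refine Finset.sum_congr rfl fun c _ => ?_
    rw [Finset.prod_mul_distrib]
    congr 1
    exact prod_biUnion_idem x _ _
  unfold mcoeff
  calc ∑ x ∈ Finset.univ.filter (fun x : Pt n => ∀ i ∉ g, x i = 0), L.act (evm f) x
      = ∑ x ∈ Finset.univ.filter (fun x : Pt n => ∀ i ∉ g, x i = 0),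
          ∑ c ∈ f.pi fun _ => (Finset.univ : Finset (Option (Fin n))),
            (∏ i ∈ f.attach, lcoef L i.1 (c i.1 i.2)) * evm (Usel f c) x :=
        Finset.sum_congr rfl fun x _ => step1 x
    _ = ∑ c ∈ f.pi fun _ => (Finset.univ : Finset (Option (Fin n))),
          ∑ x ∈ Finset.univ.filter (fun x : Pt n => ∀ i ∉ g, x i = 0),
            (∏ i ∈ f.attach, lcoef L i.1 (c i.1 i.2)) * evm (Usel f c) x :=
        Finset.sum_comm
    _ = ∑ c ∈ f.pi fun _ => (Finset.univ : Finset (Option (Fin n))),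
          (∏ i ∈ f.attach, lcoef L i.1 (c i.1 i.2)) *
            ∑ x ∈ Finset.univ.filter (fun x : Pt n => ∀ i ∉ g, x i = 0),
              evm (Usel f c) x := by
        refine Finset.sum_congr rfl fun c _ => ?_
        rw [Finset.mul_sum]
    _ = _ := by
        refine Finset.sum_congr rfl fun c _ => ?_
        congr 1
        exact mcoeff_evm (Usel f c) g

/-! ### The combinatorial core -/

/-- Allowed `A`-entry associated with `O_{h1}∖O_{h2}∖D`. -/
def O1A (C : Setup n) (s t : Fin n) : Prop :=
  ∃ p ∈ (C.O1 \ C.O2) \ C.D, ∃ q : Mon n, s ∉ q ∧ t ∉ q ∧ C.h1 = insert s q ∧ p = insert t q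

/-- Allowed `A`-entry associated with `O_{h2}∖O_{h1}∖D`. -/
def O2A (C : Setup n) (s t : Fin n) : Prop :=
  ∃ p ∈ (C.O2 \ C.O1) \ C.D, ∃ q : Mon n, s ∉ q ∧ t ∉ q ∧ C.h2 = insert s q ∧ p = insert t q

/-- Allowed `b`-entry associated with `O_{h1}∖O_{h2}∖D`. -/
def O1B (C : Setup n) (r : Fin n) : Prop :=
  ∃ p ∈ (C.O1 \ C.O2) \ C.D, r ∉ p ∧ C.h1 = insert r p

/-- Allowed `b`-entry associated with `O_{h2}∖O_{h1}∖D`. -/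
def O2B (C : Setup n) (r : Fin n) : Prop :=
  ∃ p ∈ (C.O2 \ C.O1) \ C.D, r ∉ p ∧ C.h2 = insert r p

lemma Hsub_of_O1 (C : Setup n) {p : Mon n} (hp : p ∈ (C.O1 \ C.O2) \ C.D) :
    C.h1 ∩ C.h2 ⊆ p := by
  by_contra hn
  exact hp.2 ⟨Or.inl hp.1.1, hn⟩

lemma Hsub_of_O2 (C : Setup n) {p : Mon n} (hp : p ∈ (C.O2 \ C.O1) \ C.D) :
    C.h1 ∩ C.h2 ⊆ p := by
  by_contra hn
  exact hp.2 ⟨Or.inr hp.1.1, hn⟩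

lemma O1A_struct (C : Setup n) {s t : Fin n} (h : O1A C s t) (hts : t ≠ s) :
    s ∈ C.h1 \ C.h2 ∧ t ∉ C.h1 := by
  obtain ⟨p, hp, q, hsq, htq, h1e, pe⟩ := h
  have hHp : C.h1 ∩ C.h2 ⊆ p := Hsub_of_O1 C hp
  have hsh1 : s ∈ C.h1 := h1e ▸ Finset.mem_insert_self s q
  have htnh1 : t ∉ C.h1 := by
    rw [h1e]
    intro hmem
    rcases Finset.mem_insert.1 hmem with h' | h'
    · exact hts h'
    · exact htq h'
  refine ⟨Finset.mem_sdiff.2 ⟨hsh1, fun hsh2 => ?_⟩, htnh1⟩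
  have hsp : s ∈ p := hHp (Finset.mem_inter.2 ⟨hsh1, hsh2⟩)
  rw [pe] at hsp
  rcases Finset.mem_insert.1 hsp with h' | h'
  · exact hts h'.symm
  · exact hsq h'

lemma O1B_struct (C : Setup n) {r : Fin n} (h : O1B C r) : r ∈ C.h1 \ C.h2 := by
  obtain ⟨p, hp, hrp, h1e⟩ := h
  have hHp : C.h1 ∩ C.h2 ⊆ p := Hsub_of_O1 C hp
  have hrh1 : r ∈ C.h1 := h1e ▸ Finset.mem_insert_self r p
  refine Finset.mem_sdiff.2 ⟨hrh1, fun hrh2 => ?_⟩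
  exact hrp (hHp (Finset.mem_inter.2 ⟨hrh1, hrh2⟩))

lemma O2A_not_mem_h2 (C : Setup n) {s t : Fin n} (h : O2A C s t) (hts : t ≠ s) :
    t ∉ C.h2 := by
  obtain ⟨p, hp, q, hsq, htq, h2e, pe⟩ := h
  rw [h2e]
  intro hmem
  rcases Finset.mem_insert.1 hmem with h' | h'
  · exact hts h'
  · exact htq h'

lemma pair_eq {S : Finset (Fin n)} {a b : Fin n} (ha : a ∈ S) (hb : b ∈ S) (hab : a ≠ b)
    (hcard : S.card ≤ 2) : S = {a, b} := by
  have hsub : ({a, b} : Finset (Fin n)) ⊆ S := by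
    intro x hx
    rcases Finset.mem_insert.1 hx with rfl | hx
    · exact ha
    · rw [Finset.mem_singleton.1 hx]; exact hb
  have hc : ({a, b} : Finset (Fin n)).card = 2 := Finset.card_pair hab
  exact (Finset.eq_of_subset_of_card_le hsub (by omega)).symm

lemma decomp_pair {h other : Mon n} {a b : Fin n} (hA : h \ other = {a, b}) :
    h = insert a (insert b (h ∩ other)) := by
  ext x
  simp only [Finset.mem_insert, Finset.mem_inter]
  constructor
  · intro hx
    by_cases hxo : x ∈ other
    · exact Or.inr (Or.inr ⟨hx, hxo⟩)
    · have hxd : x ∈ h \ other := Finset.mem_sdiff.2 ⟨hx, hxo⟩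
      rw [hA] at hxd
      rcases Finset.mem_insert.1 hxd with h' | h'
      · exact Or.inl h'
      · exact Or.inr (Or.inl (Finset.mem_singleton.1 h'))
  · rintro (rfl | rfl | ⟨hx, _⟩)
    · have : x ∈ h \ other := by rw [hA]; exact Finset.mem_insert_self _ _
      exact (Finset.mem_sdiff.1 this).1
    · have : x ∈ h \ other := by
        rw [hA]; exact Finset.mem_insert_of_mem (Finset.mem_singleton_self _)
      exact (Finset.mem_sdiff.1 this).1
    · exact hx

lemma decomp_single {h other : Mon n} {a : Fin n} (hA : h \ other = {a}) :
    h = insert a (h ∩ other) := by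
  ext x
  simp only [Finset.mem_insert, Finset.mem_inter]
  constructor
  · intro hx
    by_cases hxo : x ∈ other
    · exact Or.inr ⟨hx, hxo⟩
    · have hxd : x ∈ h \ other := Finset.mem_sdiff.2 ⟨hx, hxo⟩
      rw [hA] at hxd
      exact Or.inl (Finset.mem_singleton.1 hxd)
  · rintro (rfl | ⟨hx, _⟩)
    · have : x ∈ h \ other := by rw [hA]; exact Finset.mem_singleton_self _
      exact (Finset.mem_sdiff.1 this).1
    · exact hx

/-- The key elimination: an `O2`-allowed entry `(r, a)` with a target `a` in `h1 ∖ h2`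
contradicts the setup when `h1 ∖ h2` contains a second element `b`. -/
lemma elim_o2 (C : Setup n) (a b r : Fin n) (hab : a ≠ b)
    (haA : a ∈ C.h1 \ C.h2) (hbA : b ∈ C.h1 \ C.h2)
    (har : a < r) (hO2 : O2A C r a) : False := by
  classical
  obtain ⟨p, hp, q, hrq, haq, h2e, pe⟩ := hO2
  have hHp : C.h1 ∩ C.h2 ⊆ p := Hsub_of_O2 C hp
  have hah1 : a ∈ C.h1 := (Finset.mem_sdiff.1 haA).1
  have hanh2 : a ∉ C.h2 := (Finset.mem_sdiff.1 haA).2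
  have hbh1 : b ∈ C.h1 := (Finset.mem_sdiff.1 hbA).1
  have hbnh2 : b ∉ C.h2 := (Finset.mem_sdiff.1 hbA).2
  have hrh2 : r ∈ C.h2 := h2e ▸ Finset.mem_insert_self r q
  have hra : r ≠ a := fun h => hanh2 (h ▸ hrh2)
  have hrnh1 : r ∉ C.h1 := by
    intro hrh1
    have hrp : r ∈ p := hHp (Finset.mem_inter.2 ⟨hrh1, hrh2⟩)
    rw [pe] at hrp
    rcases Finset.mem_insert.1 hrp with h' | h'
    · exact hra h'
    · exact hrq h'
  have hrB : r ∈ C.h2 \ C.h1 := Finset.mem_sdiff.2 ⟨hrh2, hrnh1⟩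
  -- p ∉ O1, but [h2] < [p] < τ and p ∈ I, hence ¬ Ovd p h1
  have hwlt : wsum p < wsum C.h2 := by
    rw [pe, h2e, wsum_insert haq, wsum_insert hrq]
    have := two_pow_lt har
    omega
  have hlt : rowIdx C.h2 < rowIdx p := rowIdx_lt_iff.2 hwlt
  have hnovd : ¬ Ovd p C.h1 := fun hovd =>
    hp.1.2 ⟨hp.1.1.1, hovd, hlt, hp.1.1.2.2⟩
  -- h1 = {a, b} ∪ H
  have hA1 : C.h1 \ C.h2 = {a, b} := pair_eq haA hbA hab C.feas1
  have hh1 : C.h1 = insert a (insert b (C.h1 ∩ C.h2)) := decomp_pair hA1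
  have hbnH : b ∉ C.h1 ∩ C.h2 := fun h => hbnh2 (Finset.mem_inter.1 h).2
  have hanH : a ∉ C.h1 ∩ C.h2 := fun h => hanh2 (Finset.mem_inter.1 h).2
  have hrnH : r ∉ C.h1 ∩ C.h2 := fun h => hrnh1 (Finset.mem_inter.1 h).1
  have hinter : C.h2 ∩ C.h1 = C.h1 ∩ C.h2 := Finset.inter_comm _ _
  by_cases hw : ∃ w ∈ C.h2 \ C.h1, w ≠ r
  · obtain ⟨w, hwB, hwr⟩ := hw
    have hwh2 : w ∈ C.h2 := (Finset.mem_sdiff.1 hwB).1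
    have hwnh1 : w ∉ C.h1 := (Finset.mem_sdiff.1 hwB).2
    have hB1 : C.h2 \ C.h1 = {r, w} := pair_eq hrB hwB (fun h => hwr h.symm) C.feas2
    have hwnH : w ∉ C.h1 ∩ C.h2 := fun h => hwnh1 (Finset.mem_inter.1 h).1
    have hh2 : C.h2 = insert r (insert w (C.h1 ∩ C.h2)) := by
      have := decomp_pair hB1
      rwa [hinter] at this
    have hrIns : r ∉ insert w (C.h1 ∩ C.h2) := by
      intro hmem
      rcases Finset.mem_insert.1 hmem with h' | h'
      · exact hwr h'.symm
      · exact hrnH h'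
    have hq : q = insert w (C.h1 ∩ C.h2) := by
      have h1' : q = C.h2.erase r := by rw [h2e, Finset.erase_insert hrq]
      rw [h1']
      conv_lhs => rw [hh2]
      rw [Finset.erase_insert hrIns]
    have hwa : w ≠ a := fun h => hwnh1 (h ▸ hah1)
    have hwb : w ≠ b := fun h => hwnh1 (h ▸ hbh1)
    rcases lt_trichotomy w b with hlt' | heq' | hgt'
    · -- w < b : Ovd p h1 via the swap case, contradiction
      apply hnovd
      right
      refine ⟨insert a (C.h1 ∩ C.h2), b, w, ?_, ?_, hlt', ?_, ?_⟩
      · intro hmem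
        rcases Finset.mem_insert.1 hmem with h' | h'
        · exact hab h'.symm
        · exact hbnH h'
      · intro hmem
        rcases Finset.mem_insert.1 hmem with h' | h'
        · exact hwa h'
        · exact hwnH h'
      · conv_lhs => rw [hh1]
        rw [Finset.insert_comm]
      · rw [pe, hq, Finset.insert_comm]
    · exact hwb heq'
    · -- b < w : weight contradiction with h12
      have ha' : a ∉ insert b (C.h1 ∩ C.h2) := by
        intro hmem
        rcases Finset.mem_insert.1 hmem with h' | h'
        · exact hab h'
        · exact hanH h'
      have hr' : r ∉ insert w (C.h1 ∩ C.h2) := by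
        intro hmem
        rcases Finset.mem_insert.1 hmem with h' | h'
        · exact hwr h'.symm
        · exact hrnH h'
      have e1 : wsum C.h1 = 2 ^ (a : ℕ) + (2 ^ (b : ℕ) + wsum (C.h1 ∩ C.h2)) := by
        conv_lhs => rw [hh1]
        rw [wsum_insert ha', wsum_insert hbnH]
      have e2 : wsum C.h2 = 2 ^ (r : ℕ) + (2 ^ (w : ℕ) + wsum (C.h1 ∩ C.h2)) := by
        conv_lhs => rw [hh2]
        rw [wsum_insert hr', wsum_insert hwnH]
      have hws : wsum C.h1 < wsum C.h2 := by
        have h1p := two_pow_lt har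
        have h2p := two_pow_lt hgt'
        omega
      have := rowIdx_lt_iff.2 hws
      have := C.h12
      omega
  · -- h2 ∖ h1 = {r}
    push_neg at hw
    have hB1 : C.h2 \ C.h1 = {r} := by
      apply Finset.eq_singleton_iff_unique_mem.2
      exact ⟨hrB, fun x hx => hw x hx⟩
    have hh2 : C.h2 = insert r (C.h1 ∩ C.h2) := by
      have := decomp_single hB1
      rwa [hinter] at this
    have hq : q = C.h1 ∩ C.h2 := by
      have h1' : q = C.h2.erase r := by rw [h2e, Finset.erase_insert hrq]
      rw [h1']
      conv_lhs => rw [hh2]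
      rw [Finset.erase_insert hrnH]
    apply hnovd
    left
    refine ⟨b, ?_, ?_⟩
    · rw [pe, hq]
      intro hmem
      rcases Finset.mem_insert.1 hmem with h' | h'
      · exact hab h'.symm
      · exact hbnH h'
    · rw [pe, hq]
      conv_lhs => rw [hh1]
      rw [Finset.insert_comm]

lemma ovd_struct (C : Setup n) {g : Mon n} (hOvd : Ovd g C.h1) (hHg : C.h1 ∩ C.h2 ⊆ g) :
    ∃ i, i ∈ C.h1 \ C.h2 ∧ C.h1.erase i ⊆ g := by
  rcases hOvd with ⟨i, hig, h1e⟩ | ⟨q, i, j, hiq, hjq, hji, h1e, ge⟩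
  · refine ⟨i, ?_, ?_⟩
    · have hih1 : i ∈ C.h1 := h1e ▸ Finset.mem_insert_self i g
      refine Finset.mem_sdiff.2 ⟨hih1, fun hih2 => ?_⟩
      exact hig (hHg (Finset.mem_inter.2 ⟨hih1, hih2⟩))
    · rw [h1e, Finset.erase_insert hig]
  · have hih1 : i ∈ C.h1 := h1e ▸ Finset.mem_insert_self i q
    have hig : i ∉ g := by
      rw [ge]
      intro hmem
      rcases Finset.mem_insert.1 hmem with h' | h'
      · exact absurd h' (ne_of_gt hji)
      · exact hiq h'
    refine ⟨i, ?_, ?_⟩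
    · refine Finset.mem_sdiff.2 ⟨hih1, fun hih2 => ?_⟩
      exact hig (hHg (Finset.mem_inter.2 ⟨hih1, hih2⟩))
    · rw [h1e, Finset.erase_insert hiq, ge]
      exact Finset.subset_insert j q

/-- CORE: a selection that uses an `O1`-associated entry cannot have union `g`. -/
lemma core (C : Setup n) (f g : Mon n)
    (hf2 : rowIdx C.h2 < rowIdx f)
    (hg : g ∈ (C.O1 \ C.O2) \ C.D)
    (c : ∀ a ∈ f, Option (Fin n))
    (hallow : ∀ i (hi : i ∈ f) t, c i hi = some t → t ≠ i →
      t < i ∧ (O1A C i t ∨ O2A C i t))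
    (hU : Usel f c = g)
    (s0 : Fin n) (hs0 : s0 ∈ f)
    (hO1 : (∃ t0, c s0 hs0 = some t0 ∧ t0 ≠ s0 ∧ O1A C s0 t0) ∨
           (c s0 hs0 = none ∧ O1B C s0)) :
    False := by
  classical
  have hHg : C.h1 ∩ C.h2 ⊆ g := Hsub_of_O1 C hg
  have hOvd : Ovd g C.h1 := hg.1.1.2.1
  have hs0A : s0 ∈ C.h1 \ C.h2 := by
    rcases hO1 with ⟨t0, _, hts, hA⟩ | ⟨_, hB⟩
    · exact (O1A_struct C hA hts).1
    · exact O1B_struct C hB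
  have hs0h1 : s0 ∈ C.h1 := (Finset.mem_sdiff.1 hs0A).1
  -- the choice at s0 never yields an element of h1
  have hcs0 : ∀ u ∈ C.h1, c s0 hs0 ≠ some u := by
    intro u hu hequ
    rcases hO1 with ⟨t0, hct, hts, hA⟩ | ⟨hct, _⟩
    · rw [hct] at hequ
      have ht0u : t0 = u := Option.some.inj hequ
      exact (O1A_struct C hA hts).2 (ht0u ▸ hu)
    · rw [hct] at hequ
      exact nomatch hequ
  -- producers
  have hprod : ∀ u, u ∈ g → ∃ (r : Fin n) (hr : r ∈ f), c r hr = some u := by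
    intro u hu
    rw [← hU] at hu
    obtain ⟨i, hi, hmem⟩ := Finset.mem_biUnion.1 hu
    rcases hoc : c i.1 i.2 with _ | j
    · rw [hoc] at hmem
      simp [oset] at hmem
    · rw [hoc] at hmem
      simp only [oset, Finset.mem_singleton] at hmem
      subst hmem
      exact ⟨i.1, i.2, hoc⟩
  -- H ⊆ f
  have hHf : ∀ u ∈ C.h1 ∩ C.h2, u ∈ f := by
    intro u hu
    obtain ⟨r, hr, hcr⟩ := hprod u (hHg hu)
    by_cases hru : r = u
    · exact hru ▸ hr
    · obtain ⟨_, hx⟩ := hallow r hr u hcr (fun h => hru h.symm)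
      rcases hx with h | h
      · exact absurd ((O1A_struct C h (fun h' => hru h'.symm)).2)
          (by simp; exact (Finset.mem_inter.1 hu).1)
      · exact absurd (O2A_not_mem_h2 C h (fun h' => hru h'.symm))
          (by simp; exact (Finset.mem_inter.1 hu).2)
  obtain ⟨i, hiA, hsub⟩ := ovd_struct C hOvd hHg
  by_cases hsi : s0 = i
  · -- s0 is the removed variable
    by_cases hall : ∀ v ∈ C.h1 \ C.h2, v = s0
    · -- h1 ⊆ f, contradiction with row indices
      have hh1f : C.h1 ⊆ f := by
        intro x hx
        by_cases hxh2 : x ∈ C.h2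
        · exact hHf x (Finset.mem_inter.2 ⟨hx, hxh2⟩)
        · have : x ∈ C.h1 \ C.h2 := Finset.mem_sdiff.2 ⟨hx, hxh2⟩
          rw [hall x this]
          exact hs0
      have h1le := rowIdx_le_of_subset hh1f
      have := C.h12
      omega
    · push_neg at hall
      obtain ⟨v, hvA, hvs⟩ := hall
      have hvh1 : v ∈ C.h1 := (Finset.mem_sdiff.1 hvA).1
      have hvg : v ∈ g := hsub (Finset.mem_erase.2 ⟨fun h => hvs (h.trans hsi.symm), hvh1⟩)
      obtain ⟨r, hr, hcr⟩ := hprod v hvg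
      by_cases hrv : r = v
      · -- v ∈ f, hence h1 ⊆ f
        subst hrv
        have hA1 : C.h1 \ C.h2 = {r, s0} := pair_eq hvA hs0A hvs C.feas1
        have hh1f : C.h1 ⊆ f := by
          intro x hx
          by_cases hxh2 : x ∈ C.h2
          · exact hHf x (Finset.mem_inter.2 ⟨hx, hxh2⟩)
          · have hxd : x ∈ C.h1 \ C.h2 := Finset.mem_sdiff.2 ⟨hx, hxh2⟩
            rw [hA1] at hxd
            rcases Finset.mem_insert.1 hxd with rfl | hxd
            · exact hr
            · rw [Finset.mem_singleton.1 hxd]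
              exact hs0
        have h1le := rowIdx_le_of_subset hh1f
        have := C.h12
        omega
      · obtain ⟨hvr, hx⟩ := hallow r hr v hcr (fun h => hrv h.symm)
        rcases hx with h | h
        · exact ((O1A_struct C h (fun h' => hrv h'.symm)).2) hvh1
        · exact elim_o2 C v s0 r hvs hvA hs0A hvr h
  · -- s0 ∈ g: it must be produced by an O2 entry
    have hs0g : s0 ∈ g := hsub (Finset.mem_erase.2 ⟨hsi, hs0h1⟩)
    obtain ⟨r, hr, hcr⟩ := hprod s0 hs0g
    by_cases hrs : r = s0
    · subst hrs
      exact hcs0 r hs0h1 hcr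
    · obtain ⟨hsr, hx⟩ := hallow r hr s0 hcr (fun h => hrs h.symm)
      rcases hx with h | h
      · exact ((O1A_struct C h (fun h' => hrs h'.symm)).2) hs0h1
      · exact elim_o2 C s0 i r hsi hs0A hiA hsr h

/-- All factors of a nowhere-vanishing selection agree between `L` and `M`. -/
lemma factor_eq (C : Setup n) (f g : Mon n) (hf2 : rowIdx C.h2 < rowIdx f)
    (hg : g ∈ (C.O1 \ C.O2) \ C.D) (L M : LTA n) (hL : C.Mem L)
    (hagA : ∀ p ∈ (C.O2 \ C.O1) \ C.D, ∀ (q : Mon n) (s t : Fin n),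
      s ∉ q → t ∉ q → t < s → C.h2 = insert s q → p = insert t q → L.A s t = M.A s t)
    (hagB : ∀ p ∈ (C.O2 \ C.O1) \ C.D, ∀ r : Fin n, r ∉ p → C.h2 = insert r p →
      L.b r = M.b r)
    (c : ∀ a ∈ f, Option (Fin n)) (hU : Usel f c = g)
    (hz : ∀ i ∈ f.attach, lcoef L i.1 (c i.1 i.2) ≠ 0) :
    ∀ i ∈ f.attach, lcoef L i.1 (c i.1 i.2) = lcoef M i.1 (c i.1 i.2) := by
  have hallow : ∀ i (hi : i ∈ f) t, c i hi = some t → t ≠ i →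
      t < i ∧ (O1A C i t ∨ O2A C i t) := by
    intro i hi t hct hti
    have hnz := hz ⟨i, hi⟩ (Finset.mem_attach f _)
    rw [hct] at hnz
    have hnz' : L.A i t ≠ 0 := hnz
    have hlt : t < i := by
      rcases lt_trichotomy t i with h | h | h
      · exact h
      · exact absurd h hti
      · exact absurd (L.lower i t h) hnz'
    exact ⟨hlt, hL.1 i t hlt hnz'⟩
  intro i hi
  rcases hoc : c i.1 i.2 with _ | t
  · -- none
    have hnz := hz i hi
    rw [hoc] at hnz
    have hnz' : L.b i.1 ≠ 0 := hnz
    show L.b i.1 = M.b i.1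
    rcases hL.2 i.1 hnz' with h | h
    · exact (core C f g hf2 hg c hallow hU i.1 i.2 (Or.inr ⟨hoc, h⟩)).elim
    · obtain ⟨p, hp, hip, h2e⟩ := h
      exact hagB p hp i.1 hip h2e
  · show L.A i.1 t = M.A i.1 t
    by_cases hti : t = i.1
    · subst hti
      rw [L.diag, M.diag]
    · obtain ⟨hlt, hx⟩ := hallow i.1 i.2 t hoc hti
      rcases hx with h | h
      · exact (core C f g hf2 hg c hallow hU i.1 i.2 (Or.inl ⟨t, hoc, hti, h⟩)).elim
      · obtain ⟨p, hp, q, hsq, htq, h2e, pe⟩ := h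
        exact hagA p hp q i.1 t hsq htq hlt h2e pe

lemma prod_lcoef_eq (C : Setup n) (f g : Mon n) (hf2 : rowIdx C.h2 < rowIdx f)
    (hg : g ∈ (C.O1 \ C.O2) \ C.D) (L L' : LTA n) (hL : C.Mem L) (hL' : C.Mem L')
    (hagree : C.agreeO2 L L') (c : ∀ a ∈ f, Option (Fin n)) (hU : Usel f c = g) :
    (∏ i ∈ f.attach, lcoef L i.1 (c i.1 i.2)) = ∏ i ∈ f.attach, lcoef L' i.1 (c i.1 i.2) := by
  classical
  by_cases hz : ∀ i ∈ f.attach, lcoef L i.1 (c i.1 i.2) ≠ 0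
  · exact Finset.prod_congr rfl
      (factor_eq C f g hf2 hg L L' hL hagree.1 hagree.2 c hU hz)
  · by_cases hz' : ∀ i ∈ f.attach, lcoef L' i.1 (c i.1 i.2) ≠ 0
    · refine (Finset.prod_congr rfl
        (factor_eq C f g hf2 hg L' L hL'
          (fun p hp q s t h1 h2 h3 h4 h5 => (hagree.1 p hp q s t h1 h2 h3 h4 h5).symm)
          (fun p hp r h1 h2 => (hagree.2 p hp r h1 h2).symm) c hU hz')).symm
    · push_neg at hz hz'
      obtain ⟨i, hi, hzi⟩ := hz
      obtain ⟨i', hi', hzi'⟩ := hz'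
      rw [Finset.prod_eq_zero hi hzi, Finset.prod_eq_zero hi' hzi']

end Stmt12Aux


/-- for `f ∈ O^c_{h1} ∩ O^c_{h2}` and `g ∈ O_{h1}∖O_{h2}∖D`, the coefficient
`⟨(A,b)·f⟩_g` depends only on the free parameters of `(A,b)` associated with
`O_{h2}∖O_{h1}∖D`. -/
theorem stmt12 {n : ℕ} (C : Setup n) (f : Mon n) (hf : f ∈ C.O1c ∩ C.O2c)
    (g : Mon n) (hg : g ∈ ((C.O1 \ C.O2) \ C.D))
    (L L' : LTA n) (hL : C.Mem L) (hL' : C.Mem L') (hagree : C.agreeO2 L L') :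
    mcoeff (L.act (evm f)) g = mcoeff (L'.act (evm f)) g := by
  classical
  rw [Stmt12Aux.mcoeff_act, Stmt12Aux.mcoeff_act]
  refine Finset.sum_congr rfl fun c _ => ?_
  by_cases hU : Stmt12Aux.Usel f c = g
  · rw [if_pos hU]
    congr 1
    exact Stmt12Aux.prod_lcoef_eq C f g hf.1.2.2.1 hg L L' hL hL' hagree c hU
  · rw [if_neg hU, mul_zero, mul_zero]
end

section
/- Suppose W = {g_ω} has exactly one element. Then for every (A,b) ∈ LTA(n,2)_{h2}^{h1}, the coefficient of g_ω both in (A,b)·h1 and in (A,b)·h2 vanishes: ⟨(A,b)·h1⟩_{g_ω} = 0 and ⟨(A,b)·h2⟩_{g_ω} = 0. -/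
open Finset

variable {n : ℕ}

/-! ### Auxiliary lemmas -/

section Basics

variable {n : ℕ}

lemma zmod2_eq_one {u : ZMod 2} (h : u ≠ 0) : u = 1 := by
  revert h; revert u; decide

lemma zmod2_add_self (u : ZMod 2) : u + u = 0 := by revert u; decide

lemma evm_eq_ite (S : Mon n) (x : Pt n) :
    evm S x = if ∀ i ∈ S, x i = 1 then 1 else 0 := by
  by_cases h : ∀ i ∈ S, x i = 1
  · rw [if_pos h]; exact Finset.prod_eq_one h
  · rw [if_neg h]
    push_neg at h
    obtain ⟨i, hi, hne⟩ := h
    have hz : x i = 0 := by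
      have h01 : ∀ u : ZMod 2, u ≠ 1 → u = 0 := by decide
      exact h01 _ hne
    exact Finset.prod_eq_zero hi hz

lemma sum_range_pow2 (m : ℕ) : ∑ j ∈ Finset.range m, 2 ^ j = 2 ^ m - 1 := by
  induction m with
  | zero => simp
  | succ k ih =>
      rw [Finset.sum_range_succ, ih]
      have h1 : 1 ≤ 2 ^ k := Nat.one_le_two_pow
      have h2 : 2 ^ (k + 1) = 2 ^ k * 2 := by rw [pow_succ]
      omega

lemma mcoeff_evm (S T : Mon n) : mcoeff (evm S) T = if S = T then 1 else 0 := by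
  classical
  unfold mcoeff
  rw [Finset.sum_congr rfl (fun x _ => evm_eq_ite S x), Finset.sum_boole,
    Finset.filter_filter]
  by_cases hST : S ⊆ T
  · have hcard : (Finset.univ.filter
        (fun x : Pt n => (∀ i ∉ T, x i = 0) ∧ ∀ i ∈ S, x i = 1)).card
        = 2 ^ (T \ S).card := by
      have hbij : (Finset.univ.filter
          (fun x : Pt n => (∀ i ∉ T, x i = 0) ∧ ∀ i ∈ S, x i = 1)).card
          = (Finset.univ : Finset ({i // i ∈ T \ S} → ZMod 2)).card := by
        apply Finset.card_bij'
          (i := fun x _ => fun i => x i.1)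
          (j := fun y _ => fun i => if h : i ∈ T \ S then y ⟨i, h⟩
            else if i ∈ S then 1 else 0)
        · intro x hx
          simp only [Finset.mem_filter, Finset.mem_univ, true_and] at hx
          funext i
          by_cases h1 : i ∈ T \ S
          · simp [h1]
          · by_cases h2 : i ∈ S
            · simp [h1, h2, (hx.2 i h2).symm]
            · have h3 : i ∉ T := by
                intro hiT
                exact h1 (Finset.mem_sdiff.2 ⟨hiT, h2⟩)
              simp [h1, h2, (hx.1 i h3).symm]
        · intro y hy
          funext i
          simp [i.2]
        · intro x hx
          exact Finset.mem_univ _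
        · intro y hy
          simp only [Finset.mem_filter, Finset.mem_univ, true_and]
          constructor
          · intro i hiT
            have h1 : i ∉ T \ S := fun hc => hiT (Finset.mem_sdiff.1 hc).1
            have h2 : i ∉ S := fun hc => hiT (hST hc)
            simp [h1, h2]
          · intro i hiS
            have h1 : i ∉ T \ S := fun hc => (Finset.mem_sdiff.1 hc).2 hiS
            simp [h1, hiS]
      rw [hbij, Finset.card_univ, Fintype.card_fun, Fintype.card_coe, ZMod.card]
    rw [hcard]
    by_cases hTS : S = T
    · rw [if_pos hTS, hTS, Finset.sdiff_self, Finset.card_empty, pow_zero,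
        Nat.cast_one]
    · rw [if_neg hTS]
      have hne : (T \ S).Nonempty := by
        rw [Finset.sdiff_nonempty]
        intro hTsub
        exact hTS (Finset.Subset.antisymm hST hTsub)
      have hpos : 0 < (T \ S).card := Finset.card_pos.2 hne
      have hne0 : (T \ S).card ≠ 0 := hpos.ne'
      have : (2 : ℕ) ∣ 2 ^ (T \ S).card := dvd_pow_self 2 hne0
      rw [ZMod.natCast_eq_zero_iff]
      exact this
  · have hempty : (Finset.univ.filter
        (fun x : Pt n => (∀ i ∉ T, x i = 0) ∧ ∀ i ∈ S, x i = 1)) = ∅ := by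
      rw [Finset.filter_eq_empty_iff]
      intro x _
      intro hx
      obtain ⟨i, hiS, hiT⟩ := Finset.not_subset.1 hST
      have h0 : x i = 0 := hx.1 i hiT
      have h1 : x i = 1 := hx.2 i hiS
      rw [h0] at h1
      exact one_ne_zero h1.symm
    rw [hempty]
    have hne : S ≠ T := fun h => hST (h ▸ Finset.Subset.refl S)
    rw [if_neg hne]
    simp

end Basics

section Rows

variable {n : ℕ}

/-- The filter set `F(T)` of points supported in `T`. -/
private def Fset (T : Mon n) : Finset (Pt n) :=
  Finset.univ.filter (fun x : Pt n => ∀ i ∉ T, x i = 0)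

lemma mcoeff_eq_sum_Fset (f : BF n) (T : Mon n) : mcoeff f T = ∑ x ∈ Fset T, f x := rfl

lemma mcoeff_mul_var (g : BF n) (t : Fin n) (T : Mon n) :
    (∑ x ∈ Fset T, g x * x t)
      = if t ∈ T then mcoeff g T + mcoeff g (T.erase t) else 0 := by
  classical
  by_cases ht : t ∈ T
  · rw [if_pos ht]
    have hsplit : mcoeff g T
        = (∑ x ∈ (Fset T).filter (fun x => x t = 0), g x)
          + ∑ x ∈ (Fset T).filter (fun x => ¬ x t = 0), g x := by
      rw [mcoeff_eq_sum_Fset, Finset.sum_filter_add_sum_filter_not]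
    have e1 : (Fset T).filter (fun x : Pt n => x t = 0) = Fset (T.erase t) := by
      ext x
      simp only [Fset, Finset.mem_filter, Finset.mem_univ, true_and]
      constructor
      · rintro ⟨hx, hxt⟩ i hi
        by_cases hit : i = t
        · rw [hit]; exact hxt
        · exact hx i (fun hiT => hi (Finset.mem_erase.2 ⟨hit, hiT⟩))
      · intro hx
        refine ⟨fun i hi => hx i (fun hc => hi (Finset.erase_subset _ _ hc)), ?_⟩
        exact hx t (Finset.notMem_erase t T)
    have e2 : (∑ x ∈ (Fset T).filter (fun x => ¬ x t = 0), g x)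
        = ∑ x ∈ Fset T, g x * x t := by
      rw [Finset.sum_filter]
      apply Finset.sum_congr rfl
      intro x _
      by_cases hxt : x t = 0
      · rw [if_neg (by simpa using hxt), hxt, mul_zero]
      · rw [if_pos (by simpa using hxt), zmod2_eq_one hxt, mul_one]
    have key : ∀ a b : ZMod 2, (a + b) + a = b := by
      intro a b
      have hz := zmod2_add_self a
      calc (a + b) + a = b + (a + a) := by ring
        _ = b := by rw [hz, add_zero]
    rw [e1, ← mcoeff_eq_sum_Fset] at hsplit
    rw [← e2, hsplit, key]
  · rw [if_neg ht]
    apply Finset.sum_eq_zero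
    intro x hx
    simp only [Fset, Finset.mem_filter, Finset.mem_univ, true_and] at hx
    rw [hx t ht, mul_zero]

/-- The off-diagonal support of row `w`. -/
def rowT (L : LTA n) (w : Fin n) : Finset (Fin n) :=
  Finset.univ.filter (fun t => t ≠ w ∧ L.A w t ≠ 0)

lemma actPt_apply (L : LTA n) (x : Pt n) (w : Fin n) :
    L.actPt x w = x w + (∑ t ∈ rowT L w, x t) + L.b w := by
  classical
  unfold LTA.actPt
  have hmv : L.A.mulVec x w = ∑ j, L.A w j * x j := rfl
  have hsplit : (∑ j, L.A w j * x j)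
      = ∑ j ∈ rowT L w, L.A w j * x j
        + ∑ j ∈ Finset.univ.filter (fun t => ¬ (t ≠ w ∧ L.A w t ≠ 0)), L.A w j * x j := by
    rw [rowT, Finset.sum_filter_add_sum_filter_not]
  have h1 : (∑ j ∈ rowT L w, L.A w j * x j) = ∑ t ∈ rowT L w, x t := by
    apply Finset.sum_congr rfl
    intro j hj
    rw [rowT, Finset.mem_filter] at hj
    rw [zmod2_eq_one hj.2.2, one_mul]
  have h2 : (∑ j ∈ Finset.univ.filter (fun t => ¬ (t ≠ w ∧ L.A w t ≠ 0)), L.A w j * x j)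
      = x w := by
    rw [Finset.sum_eq_single w]
    · rw [L.diag w, one_mul]
    · intro j hj hjw
      rw [Finset.mem_filter] at hj
      have := hj.2
      push_neg at this
      rw [this hjw, zero_mul]
    · intro hw
      exfalso
      apply hw
      rw [Finset.mem_filter]
      refine ⟨Finset.mem_univ _, ?_⟩
      push_neg
      intro h
      exact absurd rfl h
  show L.A.mulVec x w + L.b w = _
  rw [hmv, hsplit, h1, h2]
  ring

lemma act_evm_split (L : LTA n) (h : Mon n) (w : Fin n) (hw : w ∈ h) (x : Pt n) :
    L.act (evm h) x = L.act (evm (h.erase w)) x * L.actPt x w := by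
  unfold LTA.act evm
  exact (Finset.prod_erase_mul _ _ hw).symm

lemma act_evm_triv (L : LTA n) (h : Mon n)
    (ht : ∀ i ∈ h, rowT L i = ∅ ∧ L.b i = 0) :
    L.act (evm h) = evm h := by
  funext x
  unfold LTA.act evm
  apply Finset.prod_congr rfl
  intro i hi
  rw [actPt_apply, (ht i hi).1, (ht i hi).2]
  simp

lemma mcoeff_act_split (L : LTA n) (h : Mon n) (w : Fin n) (hw : w ∈ h) (gg : Mon n) :
    mcoeff (L.act (evm h)) gg =
      ((if w ∈ gg then
          mcoeff (L.act (evm (h.erase w))) gg + mcoeff (L.act (evm (h.erase w))) (gg.erase w)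
        else 0)
      + ∑ t ∈ rowT L w, (if t ∈ gg then
          mcoeff (L.act (evm (h.erase w))) gg + mcoeff (L.act (evm (h.erase w))) (gg.erase t)
        else 0))
      + L.b w * mcoeff (L.act (evm (h.erase w))) gg := by
  classical
  set g := L.act (evm (h.erase w)) with hg
  have hpt : ∀ x, L.act (evm h) x
      = g x * x w + ((∑ t ∈ rowT L w, g x * x t) + g x * L.b w) := by
    intro x
    rw [act_evm_split L h w hw x, actPt_apply]
    rw [mul_add, mul_add, Finset.mul_sum]
    ring
  have hA : (∑ x ∈ Fset gg, g x * x w)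
      = (if w ∈ gg then mcoeff g gg + mcoeff g (gg.erase w) else 0) :=
    mcoeff_mul_var g w gg
  have hB : (∑ x ∈ Fset gg, ∑ t ∈ rowT L w, g x * x t)
      = ∑ t ∈ rowT L w, (if t ∈ gg then mcoeff g gg + mcoeff g (gg.erase t) else 0) := by
    rw [Finset.sum_comm]
    exact Finset.sum_congr rfl (fun t _ => mcoeff_mul_var g t gg)
  have hC : (∑ x ∈ Fset gg, g x * L.b w) = L.b w * mcoeff g gg := by
    rw [← Finset.sum_mul, mul_comm, ← mcoeff_eq_sum_Fset]
  calc mcoeff (L.act (evm h)) gg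
      = ∑ x ∈ Fset gg, (g x * x w + ((∑ t ∈ rowT L w, g x * x t) + g x * L.b w)) := by
        rw [mcoeff_eq_sum_Fset]
        exact Finset.sum_congr rfl (fun x _ => hpt x)
    _ = (∑ x ∈ Fset gg, g x * x w)
        + ((∑ x ∈ Fset gg, ∑ t ∈ rowT L w, g x * x t) + ∑ x ∈ Fset gg, g x * L.b w) := by
        rw [Finset.sum_add_distrib, Finset.sum_add_distrib]
    _ = _ := by
        rw [hA, hB, hC]
        ring

end Rows

section Val

variable {n : ℕ}

/-- The value `∑_{i ∈ S} 2^i` of a monomial. -/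
def mval (S : Mon n) : ℕ := ∑ i ∈ S, 2 ^ (i : ℕ)

lemma rowIdx_add_mval (S : Mon n) : rowIdx S + mval S = ∑ i : Fin n, 2 ^ (i : ℕ) := by
  rw [rowIdx, mval, add_comm]
  exact Finset.sum_add_sum_compl S _

lemma rowIdx_lt_iff (S T : Mon n) : rowIdx S < rowIdx T ↔ mval T < mval S := by
  have h1 := rowIdx_add_mval S
  have h2 := rowIdx_add_mval T
  omega

lemma mval_le_of_subset {S T : Mon n} (h : S ⊆ T) : mval S ≤ mval T :=
  Finset.sum_le_sum_of_subset h

lemma mval_lt_pow {S : Mon n} {m : ℕ} (h : ∀ i ∈ S, (i : ℕ) < m) : mval S < 2 ^ m := by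
  have himg : mval S = ∑ j ∈ S.image (Fin.val), 2 ^ j := by
    rw [Finset.sum_image (fun i _ j _ hij => Fin.val_injective hij)]
    rfl
  have hsub : S.image (Fin.val) ⊆ Finset.range m := by
    intro j hj
    rw [Finset.mem_image] at hj
    obtain ⟨i, hi, rfl⟩ := hj
    exact Finset.mem_range.2 (h i hi)
  have hle : (∑ j ∈ S.image (Fin.val), 2 ^ j) ≤ ∑ j ∈ Finset.range m, 2 ^ j :=
    Finset.sum_le_sum_of_subset hsub
  rw [sum_range_pow2] at hle
  have : (1 : ℕ) ≤ 2 ^ m := Nat.one_le_two_pow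
  omega

lemma pow_le_mval {S : Mon n} {j : Fin n} (h : j ∈ S) : 2 ^ (j : ℕ) ≤ mval S :=
  Finset.single_le_sum (f := fun i : Fin n => 2 ^ (i : ℕ)) (fun i _ => Nat.zero_le _) h

lemma mval_erase_add {S : Mon n} {i : Fin n} (h : i ∈ S) :
    mval (S.erase i) + 2 ^ (i : ℕ) = mval S :=
  Finset.sum_erase_add S _ h

lemma mval_insert {S : Mon n} {i : Fin n} (h : i ∉ S) :
    mval (insert i S) = 2 ^ (i : ℕ) + mval S :=
  Finset.sum_insert h

end Val

namespace Setup

variable {n : ℕ} (C : Setup n)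

lemma valh2_lt : mval C.h2 < mval C.h1 := (rowIdx_lt_iff _ _).1 C.h12

lemma e1_nonempty : (C.h1 \ C.h2).Nonempty := by
  rw [Finset.sdiff_nonempty]
  intro hsub
  exact absurd (mval_le_of_subset hsub) (by have := C.valh2_lt; omega)

/-- `a = max (h1 \ h2)`. -/
noncomputable def aMax : Fin n := (C.h1 \ C.h2).max' C.e1_nonempty

lemma aMax_mem : C.aMax ∈ C.h1 \ C.h2 := (C.h1 \ C.h2).max'_mem _

lemma aMax_mem_h1 : C.aMax ∈ C.h1 := (Finset.mem_sdiff.1 C.aMax_mem).1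

lemma aMax_not_h2 : C.aMax ∉ C.h2 := (Finset.mem_sdiff.1 C.aMax_mem).2

lemma mval_inter_e (S T : Mon n) : mval (S ∩ T) + mval (S \ T) = mval S :=
  Finset.sum_inter_add_sum_sdiff S T _

lemma e2_lt_aMax : ∀ j ∈ C.h2 \ C.h1, (j : ℕ) < (C.aMax : ℕ) := by
  intro j hj
  have hj2 := Finset.mem_sdiff.1 hj
  have hne : j ≠ C.aMax := by
    intro h
    exact C.aMax_not_h2 (h ▸ hj2.1)
  have he2e1 : mval (C.h2 \ C.h1) < mval (C.h1 \ C.h2) := by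
    have d1 := mval_inter_e C.h1 C.h2
    have d2 := mval_inter_e C.h2 C.h1
    have hi : C.h2 ∩ C.h1 = C.h1 ∩ C.h2 := Finset.inter_comm _ _
    rw [hi] at d2
    have := C.valh2_lt
    omega
  have hbound : mval (C.h1 \ C.h2) < 2 ^ ((C.aMax : ℕ) + 1) := by
    apply mval_lt_pow
    intro i hi
    have h5 : i ≤ C.aMax := Finset.le_max' _ i hi
    have h6 : (i : ℕ) ≤ (C.aMax : ℕ) := h5
    omega
  have hj3 : 2 ^ (j : ℕ) ≤ mval (C.h2 \ C.h1) := pow_le_mval hj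
  have : (j : ℕ) < (C.aMax : ℕ) + 1 := by
    have h2 : 2 ^ (j : ℕ) < 2 ^ ((C.aMax : ℕ) + 1) := by omega
    exact (Nat.pow_lt_pow_iff_right one_lt_two).1 h2
  have : (j:ℕ) ≠ (C.aMax : ℕ) := fun h => hne (Fin.val_injective h)
  omega

lemma mval_e2_lt : mval (C.h2 \ C.h1) < 2 ^ (C.aMax : ℕ) :=
  mval_lt_pow C.e2_lt_aMax

/-- The key valuation lemma: if removing `i ∈ h1 \ h2` from `h1` drops the value below
`mval h2`, then `i` is the maximum of `h1 \ h2`. -/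
lemma val_lemma {i : Fin n} (hi1 : i ∈ C.h1) (hi2 : i ∉ C.h2)
    (hval : mval (C.h1.erase i) < mval C.h2) : i = C.aMax := by
  by_contra hne
  have haK : C.aMax ∉ C.h1 ∩ C.h2 := fun h => C.aMax_not_h2 (Finset.mem_inter.1 h).2
  have hKsub : insert C.aMax (C.h1 ∩ C.h2) ⊆ C.h1.erase i := by
    intro x hx
    rcases Finset.mem_insert.1 hx with rfl | hx
    · exact Finset.mem_erase.2 ⟨fun h => hne h.symm, C.aMax_mem_h1⟩
    · have hx2 := Finset.mem_inter.1 hx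
      refine Finset.mem_erase.2 ⟨?_, hx2.1⟩
      intro hxi
      exact hi2 (hxi ▸ hx2.2)
  have h1le : mval (insert C.aMax (C.h1 ∩ C.h2)) ≤ mval (C.h1.erase i) :=
    mval_le_of_subset hKsub
  rw [mval_insert haK] at h1le
  have hdec := mval_inter_e C.h2 C.h1
  rw [Finset.inter_comm] at hdec
  have he2 := C.mval_e2_lt
  omega

end Setup

namespace Setup

variable {n : ℕ} (C : Setup n)

lemma P1_sub_O1 {f : Mon n} (hf : f ∈ (C.O1 \ C.O2) \ C.D) : f ∈ C.O1 := hf.1.1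

lemma P2_sub_O2 {f : Mon n} (hf : f ∈ (C.O2 \ C.O1) \ C.D) : f ∈ C.O2 := hf.1.1

lemma K_sub_P1 {f : Mon n} (hf : f ∈ (C.O1 \ C.O2) \ C.D) : C.h1 ∩ C.h2 ⊆ f := by
  by_contra hK
  exact hf.2 ⟨Set.mem_union_left _ hf.1.1, hK⟩

lemma K_sub_P2 {f : Mon n} (hf : f ∈ (C.O2 \ C.O1) \ C.D) : C.h1 ∩ C.h2 ⊆ f := by
  by_contra hK
  exact hf.2 ⟨Set.mem_union_right _ hf.1.1, hK⟩

lemma O1_val {f : Mon n} (hf : f ∈ C.O1) : mval f < mval C.h2 :=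
  (rowIdx_lt_iff _ _).1 hf.2.2.1

lemma lic1_aMax {q : Mon n} {s t : Fin n} (hf : insert t q ∈ (C.O1 \ C.O2) \ C.D)
    (hsq : s ∉ q) (htq : t ∉ q) (hts : t < s) (hh1 : C.h1 = insert s q) :
    s = C.aMax ∧ t ∉ C.h1 ∧ q = C.h1.erase s := by
  have hq : q = C.h1.erase s := by rw [hh1, Finset.erase_insert hsq]
  have hsh1 : s ∈ C.h1 := hh1 ▸ Finset.mem_insert_self s q
  have hts_ne : t ≠ s := hts.ne
  have hth1 : t ∉ C.h1 := by
    rw [hh1]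
    intro hc
    rcases Finset.mem_insert.1 hc with h | h
    · exact hts_ne h
    · exact htq h
  have hsf : s ∉ insert t q := by
    intro hc
    rcases Finset.mem_insert.1 hc with h | h
    · exact hts_ne h.symm
    · exact hsq h
  have hsh2 : s ∉ C.h2 := by
    intro hc
    exact hsf (C.K_sub_P1 hf (Finset.mem_inter.2 ⟨hsh1, hc⟩))
  have hvf : mval (insert t q) < mval C.h2 := C.O1_val (C.P1_sub_O1 hf)
  have hvq : mval (C.h1.erase s) ≤ mval (insert t q) := by
    rw [← hq]
    exact mval_le_of_subset (Finset.subset_insert _ _)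
  exact ⟨C.val_lemma hsh1 hsh2 (lt_of_le_of_lt hvq hvf), hth1, hq⟩

lemma lic1b_aMax {f : Mon n} {r : Fin n} (hf : f ∈ (C.O1 \ C.O2) \ C.D)
    (hrf : r ∉ f) (hh1 : C.h1 = insert r f) : r = C.aMax ∧ f = C.h1.erase r := by
  have hq : f = C.h1.erase r := by rw [hh1, Finset.erase_insert hrf]
  have hrh1 : r ∈ C.h1 := hh1 ▸ Finset.mem_insert_self r f
  have hrh2 : r ∉ C.h2 := by
    intro hc
    exact hrf (C.K_sub_P1 hf (Finset.mem_inter.2 ⟨hrh1, hc⟩))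
  have hvf : mval f < mval C.h2 := C.O1_val (C.P1_sub_O1 hf)
  rw [hq] at hvf
  exact ⟨C.val_lemma hrh1 hrh2 hvf, hq⟩

lemma lic2 {q : Mon n} {s t : Fin n} (hf : insert t q ∈ (C.O2 \ C.O1) \ C.D)
    (hsq : s ∉ q) (htq : t ∉ q) (hts : t < s) (hh2 : C.h2 = insert s q) :
    s ∉ C.h1 ∧ t ∉ C.h2 ∧ q = C.h2.erase s := by
  have hq : q = C.h2.erase s := by rw [hh2, Finset.erase_insert hsq]
  have hsh2 : s ∈ C.h2 := hh2 ▸ Finset.mem_insert_self s q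
  have hts_ne : t ≠ s := hts.ne
  have hth2 : t ∉ C.h2 := by
    rw [hh2]
    intro hc
    rcases Finset.mem_insert.1 hc with h | h
    · exact hts_ne h
    · exact htq h
  have hsf : s ∉ insert t q := by
    intro hc
    rcases Finset.mem_insert.1 hc with h | h
    · exact hts_ne h.symm
    · exact hsq h
  have hsh1 : s ∉ C.h1 := by
    intro hc
    exact hsf (C.K_sub_P2 hf (Finset.mem_inter.2 ⟨hc, hsh2⟩))
  exact ⟨hsh1, hth2, hq⟩

lemma lic2b {f : Mon n} {r : Fin n} (hf : f ∈ (C.O2 \ C.O1) \ C.D)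
    (hrf : r ∉ f) (hh2 : C.h2 = insert r f) : r ∉ C.h1 ∧ f = C.h2.erase r := by
  have hq : f = C.h2.erase r := by rw [hh2, Finset.erase_insert hrf]
  have hrh2 : r ∈ C.h2 := hh2 ▸ Finset.mem_insert_self r f
  have hrh1 : r ∉ C.h1 := by
    intro hc
    exact hrf (C.K_sub_P2 hf (Finset.mem_inter.2 ⟨hc, hrh2⟩))
  exact ⟨hrh1, hq⟩

lemma trivRow {L : LTA n} (hL : C.Mem L) {i : Fin n}
    (hia : i ≠ C.aMax) (hi2 : i ∉ C.h2 \ C.h1) :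
    rowT L i = ∅ ∧ L.b i = 0 := by
  constructor
  · rw [Finset.eq_empty_iff_forall_notMem]
    intro t ht
    rw [rowT, Finset.mem_filter] at ht
    obtain ⟨-, htne, htA⟩ := ht
    rcases lt_trichotomy t i with hlt | heq | hgt
    · rcases hL.1 i t hlt htA with ⟨f, hf, q, hsq, htq, hh1, hfq⟩ |
        ⟨f, hf, q, hsq, htq, hh2, hfq⟩
      · subst hfq
        exact hia (C.lic1_aMax hf hsq htq hlt hh1).1
      · subst hfq
        obtain ⟨hs1, -, -⟩ := C.lic2 hf hsq htq hlt hh2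
        exact hi2 (Finset.mem_sdiff.2 ⟨hh2 ▸ Finset.mem_insert_self i q, hs1⟩)
    · exact htne heq
    · exact htA (L.lower i t hgt)
  · by_contra hb
    rcases hL.2 i hb with ⟨f, hf, hrf, hh1⟩ | ⟨f, hf, hrf, hh2⟩
    · exact hia (C.lic1b_aMax hf hrf hh1).1
    · obtain ⟨hr1, -⟩ := C.lic2b hf hrf hh2
      exact hi2 (Finset.mem_sdiff.2 ⟨hh2 ▸ Finset.mem_insert_self i f, hr1⟩)

lemma rowTa_lic {L : LTA n} (hL : C.Mem L) {t : Fin n} (ht : t ∈ rowT L C.aMax) :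
    t ∉ C.h1 ∧ insert t (C.h1.erase C.aMax) ∈ (C.O1 \ C.O2) \ C.D := by
  rw [rowT, Finset.mem_filter] at ht
  obtain ⟨-, htne, htA⟩ := ht
  rcases lt_trichotomy t C.aMax with hlt | heq | hgt
  · rcases hL.1 _ t hlt htA with ⟨f, hf, q, hsq, htq, hh1, hfq⟩ |
      ⟨f, hf, q, hsq, htq, hh2, hfq⟩
    · subst hfq
      obtain ⟨-, hth1, hq⟩ := C.lic1_aMax hf hsq htq hlt hh1
      rw [← hq]
      exact ⟨hth1, hf⟩
    · subst hfq
      obtain ⟨hs1, -, -⟩ := C.lic2 hf hsq htq hlt hh2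
      exact absurd (hh2 ▸ Finset.mem_insert_self _ q : C.aMax ∈ C.h2) C.aMax_not_h2
  · exact absurd heq htne
  · exact absurd (L.lower _ _ hgt) htA

lemma rowba_lic {L : LTA n} (hL : C.Mem L) (hb : L.b C.aMax ≠ 0) :
    C.h1.erase C.aMax ∈ (C.O1 \ C.O2) \ C.D := by
  rcases hL.2 _ hb with ⟨f, hf, hrf, hh1⟩ | ⟨f, hf, hrf, hh2⟩
  · obtain ⟨-, hq⟩ := C.lic1b_aMax hf hrf hh1
    rw [← hq]
    exact hf
  · obtain ⟨hr1, -⟩ := C.lic2b hf hrf hh2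
    exact absurd C.aMax_mem_h1 hr1

lemma rowTc_lic {L : LTA n} (hL : C.Mem L) {s t : Fin n} (hs : s ∈ C.h2)
    (ht : t ∈ rowT L s) :
    t < s ∧ t ∉ C.h2 ∧ insert t (C.h2.erase s) ∈ (C.O2 \ C.O1) \ C.D := by
  rw [rowT, Finset.mem_filter] at ht
  obtain ⟨-, htne, htA⟩ := ht
  rcases lt_trichotomy t s with hlt | heq | hgt
  · rcases hL.1 _ t hlt htA with ⟨f, hf, q, hsq, htq, hh1, hfq⟩ |
      ⟨f, hf, q, hsq, htq, hh2, hfq⟩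
    · subst hfq
      obtain ⟨hsa, -, -⟩ := C.lic1_aMax hf hsq htq hlt hh1
      exact absurd (hsa ▸ hs) C.aMax_not_h2
    · subst hfq
      obtain ⟨-, hth2, hq⟩ := C.lic2 hf hsq htq hlt hh2
      rw [← hq]
      exact ⟨hlt, hth2, hf⟩
  · exact absurd heq htne
  · exact absurd (L.lower _ _ hgt) htA

lemma rowbc_lic {L : LTA n} (hL : C.Mem L) {r : Fin n} (hr : r ∈ C.h2)
    (hb : L.b r ≠ 0) : C.h2.erase r ∈ (C.O2 \ C.O1) \ C.D := by
  rcases hL.2 _ hb with ⟨f, hf, hrf, hh1⟩ | ⟨f, hf, hrf, hh2⟩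
  · obtain ⟨hra, -⟩ := C.lic1b_aMax hf hrf hh1
    exact absurd (hra ▸ hr) C.aMax_not_h2
  · obtain ⟨-, hq⟩ := C.lic2b hf hrf hh2
    rw [← hq]
    exact hf

lemma P1_struct {p : Mon n} (hp : p ∈ (C.O1 \ C.O2) \ C.D) :
    C.h1.erase C.aMax ⊆ p ∧ C.aMax ∉ p := by
  have hO1 : p ∈ C.O1 := hp.1.1
  have hovd : Ovd p C.h1 := hO1.2.1
  have hK := C.K_sub_P1 hp
  have hval : mval p < mval C.h2 := C.O1_val hO1
  rcases hovd with ⟨i, hip, hins⟩ | ⟨q, i, j, hiq, hjq, hji, hgi, hhj⟩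
  · have hp_eq : C.h1.erase i = p := by rw [hins, Finset.erase_insert hip]
    have hih1 : i ∈ C.h1 := hins ▸ Finset.mem_insert_self i p
    have hih2 : i ∉ C.h2 := by
      intro hc
      exact hip (hK (Finset.mem_inter.2 ⟨hih1, hc⟩))
    have hval' : mval (C.h1.erase i) < mval C.h2 := by rw [hp_eq]; exact hval
    have hia : i = C.aMax := C.val_lemma hih1 hih2 hval'
    rw [← hia]
    exact ⟨hp_eq ▸ Finset.Subset.refl _, hp_eq ▸ Finset.notMem_erase i C.h1⟩
  · have hq : q = C.h1.erase i := by rw [hgi, Finset.erase_insert hiq]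
    have hih1 : i ∈ C.h1 := hgi ▸ Finset.mem_insert_self i q
    have hinp : i ∉ p := by
      rw [hhj]
      intro hc
      rcases Finset.mem_insert.1 hc with h | h
      · exact absurd (h ▸ hji) (lt_irrefl i)
      · exact hiq h
    have hih2 : i ∉ C.h2 := by
      intro hc
      exact hinp (hK (Finset.mem_inter.2 ⟨hih1, hc⟩))
    have hval' : mval (C.h1.erase i) < mval C.h2 := by
      rw [← hq]
      calc mval q ≤ mval p := by
            rw [hhj]; exact mval_le_of_subset (Finset.subset_insert _ _)
        _ < mval C.h2 := hval
    have hia : i = C.aMax := C.val_lemma hih1 hih2 hval'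
    rw [← hia, ← hq]
    constructor
    · rw [hhj]; exact Finset.subset_insert _ _
    · exact hinp

end Setup

/-- if `W = {g_ω}`, then for every `(A,b) ∈ LTA(n,2)_{h2}^{h1}`, the
coefficient of `g_ω` in `(A,b)·h1` and in `(A,b)·h2` vanishes. -/
theorem stmt14 {n : ℕ} (C : Setup n) (gω : Mon n) (hW : C.W = {gω})
    (L : LTA n) (hL : C.Mem L) :
    mcoeff (L.act (evm C.h1)) gω = 0 ∧ mcoeff (L.act (evm C.h2)) gω = 0 := by
  classical
  have hgW : gω ∈ C.W := by rw [hW]; exact Set.mem_singleton _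
  obtain ⟨hgc, L₀, hL₀, p, hpP1, hcoef⟩ := hgW
  obtain ⟨hg1c, hg2c⟩ := hgc
  obtain ⟨gI, gnot1, grow1, grow2⟩ := hg1c
  obtain ⟨-, gnot2, -, -⟩ := hg2c
  have valg : mval gω < mval C.h2 := (rowIdx_lt_iff _ _).1 grow1
  have notOvd1 : ¬ Ovd gω C.h1 := fun hovd => gnot1 ⟨gI, hovd, grow1, grow2⟩
  have notOvd2 : ¬ Ovd gω C.h2 := fun hovd => gnot2 ⟨gI, hovd, grow2⟩
  have hps := C.P1_struct hpP1
  have hvh : mval C.h2 < mval C.h1 := C.valh2_lt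
  -- the subclaim : gω must meet h2 \ h1
  have SUB : (∀ i ∈ gω, i ∉ C.h2 \ C.h1) → False := by
    intro hdis
    by_cases ha : C.aMax ∈ gω
    · have htriv : ∀ i ∈ gω.erase C.aMax, rowT L₀ i = ∅ ∧ L₀.b i = 0 := by
        intro i hi
        have hie := Finset.mem_erase.1 hi
        exact C.trivRow hL₀ hie.1 (hdis i hie.2)
      have hexp := mcoeff_act_split L₀ gω C.aMax ha p
      rw [act_evm_triv L₀ (gω.erase C.aMax) htriv] at hexp
      have hsubgw : C.h1 ⊆ gω → False := by
        intro hsub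
        have := mval_le_of_subset hsub
        omega
      have F1 : gω.erase C.aMax ≠ p := by
        intro heq
        apply hsubgw
        intro i hi
        by_cases hia : i = C.aMax
        · exact hia ▸ ha
        · have : i ∈ gω.erase C.aMax := heq ▸ (hps.1 (Finset.mem_erase.2 ⟨hia, hi⟩))
          exact Finset.mem_of_mem_erase this
      have hz1 : mcoeff (evm (gω.erase C.aMax)) p = 0 := by
        rw [mcoeff_evm, if_neg F1]
      have hsum0 : (∑ t ∈ rowT L₀ C.aMax, if t ∈ p then
          mcoeff (evm (gω.erase C.aMax)) p
            + mcoeff (evm (gω.erase C.aMax)) (p.erase t) else 0) = 0 := by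
        apply Finset.sum_eq_zero
        intro t ht
        obtain ⟨hth1, -⟩ := C.rowTa_lic hL₀ ht
        by_cases htp : t ∈ p
        · rw [if_pos htp, hz1, zero_add, mcoeff_evm, if_neg]
          intro heq
          apply hsubgw
          intro i hi
          by_cases hia : i = C.aMax
          · exact hia ▸ ha
          · have hipt : i ∈ p.erase t := by
              refine Finset.mem_erase.2 ⟨fun hit => hth1 (hit ▸ hi), ?_⟩
              exact hps.1 (Finset.mem_erase.2 ⟨hia, hi⟩)
            have : i ∈ gω.erase C.aMax := heq ▸ hipt
            exact Finset.mem_of_mem_erase this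
        · rw [if_neg htp]
      apply hcoef
      rw [hexp, if_neg hps.2, hsum0, hz1, mul_zero, add_zero, add_zero]
    · have htriv : ∀ i ∈ gω, rowT L₀ i = ∅ ∧ L₀.b i = 0 := by
        intro i hi
        exact C.trivRow hL₀ (fun h => ha (h ▸ hi)) (hdis i hi)
      apply hcoef
      rw [act_evm_triv L₀ gω htriv, mcoeff_evm, if_neg]
      intro heq
      exact gnot1 (by rw [heq]; exact C.P1_sub_O1 hpP1)
  constructor
  · -- coefficient in (A,b)·h1
    have htriv : ∀ i ∈ C.h1.erase C.aMax, rowT L i = ∅ ∧ L.b i = 0 := by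
      intro i hi
      have hie := Finset.mem_erase.1 hi
      refine C.trivRow hL hie.1 ?_
      intro hc
      exact (Finset.mem_sdiff.1 hc).2 hie.2
    rw [mcoeff_act_split L C.h1 C.aMax C.aMax_mem_h1 gω,
      act_evm_triv L (C.h1.erase C.aMax) htriv]
    have hz1 : mcoeff (evm (C.h1.erase C.aMax)) gω = 0 := by
      rw [mcoeff_evm, if_neg]
      intro heq
      apply notOvd1
      left
      exact ⟨C.aMax, heq ▸ Finset.notMem_erase _ _,
        by rw [← heq, Finset.insert_erase C.aMax_mem_h1]⟩
    have hterm1 : (if C.aMax ∈ gω then mcoeff (evm (C.h1.erase C.aMax)) gω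
        + mcoeff (evm (C.h1.erase C.aMax)) (gω.erase C.aMax) else 0) = 0 := by
      by_cases ha : C.aMax ∈ gω
      · rw [if_pos ha, hz1, zero_add, mcoeff_evm, if_neg]
        intro heq
        have hgh1 : gω = C.h1 := by
          rw [← Finset.insert_erase ha, ← heq, Finset.insert_erase C.aMax_mem_h1]
        rw [hgh1] at valg
        omega
      · rw [if_neg ha]
    have hterm2 : (∑ t ∈ rowT L C.aMax, if t ∈ gω then
        mcoeff (evm (C.h1.erase C.aMax)) gω
          + mcoeff (evm (C.h1.erase C.aMax)) (gω.erase t) else 0) = 0 := by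
      apply Finset.sum_eq_zero
      intro t ht
      obtain ⟨hth1, hlic⟩ := C.rowTa_lic hL ht
      by_cases htg : t ∈ gω
      · rw [if_pos htg, hz1, zero_add, mcoeff_evm, if_neg]
        intro heq
        apply gnot1
        have hgw : gω = insert t (C.h1.erase C.aMax) := by
          rw [← Finset.insert_erase htg, heq]
        rw [hgw]
        exact C.P1_sub_O1 hlic
      · rw [if_neg htg]
    rw [hterm1, hterm2, hz1, mul_zero, add_zero, add_zero]
  · -- coefficient in (A,b)·h2
    have hcard := C.feas2
    have hah2 := C.aMax_not_h2
    have h012 : (C.h2 \ C.h1).card = 0 ∨ (C.h2 \ C.h1).card = 1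
        ∨ (C.h2 \ C.h1).card = 2 := by omega
    rcases h012 with h0 | h1 | h2'
    · have he : C.h2 \ C.h1 = ∅ := Finset.card_eq_zero.1 h0
      have htriv : ∀ i ∈ C.h2, rowT L i = ∅ ∧ L.b i = 0 := by
        intro i hi
        exact C.trivRow hL (fun hia => hah2 (hia ▸ hi))
          (by rw [he]; exact Finset.notMem_empty i)
      rw [act_evm_triv L C.h2 htriv, mcoeff_evm, if_neg]
      intro heq
      rw [← heq] at valg
      exact lt_irrefl _ valg
    · obtain ⟨c, hc⟩ := Finset.card_eq_one.1 h1
      have hce2 : c ∈ C.h2 \ C.h1 := by rw [hc]; exact Finset.mem_singleton_self c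
      have hch2 : c ∈ C.h2 := (Finset.mem_sdiff.1 hce2).1
      have htriv : ∀ i ∈ C.h2.erase c, rowT L i = ∅ ∧ L.b i = 0 := by
        intro i hi
        have hie := Finset.mem_erase.1 hi
        refine C.trivRow hL (fun hia => hah2 (hia ▸ hie.2)) ?_
        rw [hc]
        intro hmem
        exact hie.1 (Finset.mem_singleton.1 hmem)
      rw [mcoeff_act_split L C.h2 c hch2 gω, act_evm_triv L (C.h2.erase c) htriv]
      have hz1 : mcoeff (evm (C.h2.erase c)) gω = 0 := by
        rw [mcoeff_evm, if_neg]
        intro heq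
        apply notOvd2
        left
        exact ⟨c, heq ▸ Finset.notMem_erase _ _,
          by rw [← heq, Finset.insert_erase hch2]⟩
      have hterm1 : (if c ∈ gω then mcoeff (evm (C.h2.erase c)) gω
          + mcoeff (evm (C.h2.erase c)) (gω.erase c) else 0) = 0 := by
        by_cases hcg : c ∈ gω
        · rw [if_pos hcg, hz1, zero_add, mcoeff_evm, if_neg]
          intro heq
          have hgh2 : gω = C.h2 := by
            rw [← Finset.insert_erase hcg, ← heq, Finset.insert_erase hch2]
          rw [hgh2] at valg
          omega
        · rw [if_neg hcg]
      have hterm2 : (∑ t ∈ rowT L c, if t ∈ gω then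
          mcoeff (evm (C.h2.erase c)) gω
            + mcoeff (evm (C.h2.erase c)) (gω.erase t) else 0) = 0 := by
        apply Finset.sum_eq_zero
        intro t ht
        obtain ⟨htc, hth2, hlic⟩ := C.rowTc_lic hL hch2 ht
        by_cases htg : t ∈ gω
        · rw [if_pos htg, hz1, zero_add, mcoeff_evm, if_neg]
          intro heq
          apply gnot2
          have hgw : gω = insert t (C.h2.erase c) := by
            rw [← Finset.insert_erase htg, heq]
          rw [hgw]
          exact C.P2_sub_O2 hlic
        · rw [if_neg htg]
      rw [hterm1, hterm2, hz1, mul_zero, add_zero, add_zero]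
    · -- |h2 \ h1| = 2
      obtain ⟨c, d, hcd, hset⟩ := Finset.card_eq_two.1 h2'
      have hce2 : c ∈ C.h2 \ C.h1 := by rw [hset]; exact Finset.mem_insert_self _ _
      have hde2 : d ∈ C.h2 \ C.h1 := by
        rw [hset]; exact Finset.mem_insert_of_mem (Finset.mem_singleton_self d)
      have hch2 : c ∈ C.h2 := (Finset.mem_sdiff.1 hce2).1
      have hdh2 : d ∈ C.h2 := (Finset.mem_sdiff.1 hde2).1
      have hdc' : d ∈ C.h2.erase c := Finset.mem_erase.2 ⟨hcd.symm, hdh2⟩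
      have hid : insert d ((C.h2.erase c).erase d) = C.h2.erase c :=
        Finset.insert_erase hdc'
      have hcomm : (C.h2.erase c).erase d = (C.h2.erase d).erase c := by
        ext x
        simp only [Finset.mem_erase]
        tauto
      have hic : insert c ((C.h2.erase c).erase d) = C.h2.erase d := by
        rw [hcomm]
        exact Finset.insert_erase (Finset.mem_erase.2 ⟨hcd, hch2⟩)
      have htrivB : ∀ i ∈ (C.h2.erase c).erase d, rowT L i = ∅ ∧ L.b i = 0 := by
        intro i hi
        have hie := Finset.mem_erase.1 hi
        have hie2 := Finset.mem_erase.1 hie.2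
        refine C.trivRow hL (fun hia => hah2 (hia ▸ hie2.2)) ?_
        rw [hset]
        intro hmem
        rcases Finset.mem_insert.1 hmem with h | h
        · exact hie2.1 h
        · exact hie.1 (Finset.mem_singleton.1 h)
      have hBnotE2 : ∀ i ∈ (C.h2.erase c).erase d, i ∉ C.h2 \ C.h1 := by
        intro i hi
        have hie := Finset.mem_erase.1 hi
        have hie2 := Finset.mem_erase.1 hie.2
        rw [hset]
        intro hmem
        rcases Finset.mem_insert.1 hmem with h | h
        · exact hie2.1 h
        · exact hie.1 (Finset.mem_singleton.1 h)
      have hinner : ∀ m : Mon n, mcoeff (L.act (evm (C.h2.erase c))) m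
          = ((if d ∈ m then mcoeff (evm ((C.h2.erase c).erase d)) m
              + mcoeff (evm ((C.h2.erase c).erase d)) (m.erase d) else 0)
            + ∑ u ∈ rowT L d, (if u ∈ m then mcoeff (evm ((C.h2.erase c).erase d)) m
              + mcoeff (evm ((C.h2.erase c).erase d)) (m.erase u) else 0))
            + L.b d * mcoeff (evm ((C.h2.erase c).erase d)) m := by
        intro m
        rw [mcoeff_act_split L (C.h2.erase c) d hdc' m,
          act_evm_triv L ((C.h2.erase c).erase d) htrivB]
      -- Z1 : inner coefficient at gω vanishes
      have k1 : mcoeff (evm ((C.h2.erase c).erase d)) gω = 0 := by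
        rw [mcoeff_evm, if_neg]
        intro heq
        exact SUB (by rw [← heq]; exact hBnotE2)
      have hz_gw : mcoeff (L.act (evm (C.h2.erase c))) gω = 0 := by
        rw [hinner gω]
        have t1 : (if d ∈ gω then mcoeff (evm ((C.h2.erase c).erase d)) gω
            + mcoeff (evm ((C.h2.erase c).erase d)) (gω.erase d) else 0) = 0 := by
          by_cases hd : d ∈ gω
          · rw [if_pos hd, k1, zero_add, mcoeff_evm, if_neg]
            intro heq
            apply notOvd2
            left
            have hgw : gω = C.h2.erase c := by
              rw [← Finset.insert_erase hd, ← heq, hid]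
            refine ⟨c, ?_, by rw [hgw, Finset.insert_erase hch2]⟩
            rw [hgw]
            exact Finset.notMem_erase _ _
          · rw [if_neg hd]
        have t2 : (∑ u ∈ rowT L d, if u ∈ gω then
            mcoeff (evm ((C.h2.erase c).erase d)) gω
              + mcoeff (evm ((C.h2.erase c).erase d)) (gω.erase u) else 0) = 0 := by
          apply Finset.sum_eq_zero
          intro u hu
          obtain ⟨hud, huh2, -⟩ := C.rowTc_lic hL hdh2 hu
          by_cases hug : u ∈ gω
          · rw [if_pos hug, k1, zero_add, mcoeff_evm, if_neg]
            intro heq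
            apply SUB
            intro i hi
            rw [← Finset.insert_erase hug, ← heq] at hi
            rcases Finset.mem_insert.1 hi with h | h
            · subst h; exact fun hmem => huh2 (Finset.mem_sdiff.1 hmem).1
            · exact hBnotE2 i h
          · rw [if_neg hug]
        rw [t1, t2, k1, mul_zero, add_zero, add_zero]
      -- Z2 : inner coefficient at gω.erase c vanishes (when c ∈ gω)
      have hz_ec : c ∈ gω → mcoeff (L.act (evm (C.h2.erase c))) (gω.erase c) = 0 := by
        intro hcg
        rw [hinner (gω.erase c)]
        have k1' : mcoeff (evm ((C.h2.erase c).erase d)) (gω.erase c) = 0 := by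
          rw [mcoeff_evm, if_neg]
          intro heq
          apply notOvd2
          left
          have hgw : gω = C.h2.erase d := by
            rw [← Finset.insert_erase hcg, ← heq, hic]
          refine ⟨d, ?_, by rw [hgw, Finset.insert_erase hdh2]⟩
          rw [hgw]
          exact Finset.notMem_erase _ _
        have t1 : (if d ∈ gω.erase c then mcoeff (evm ((C.h2.erase c).erase d)) (gω.erase c)
            + mcoeff (evm ((C.h2.erase c).erase d)) ((gω.erase c).erase d) else 0) = 0 := by
          by_cases hd : d ∈ gω.erase c
          · rw [if_pos hd, k1', zero_add, mcoeff_evm, if_neg]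
            intro heq
            have hgw : gω = C.h2 := by
              rw [← Finset.insert_erase hcg, ← Finset.insert_erase hd, ← heq, hid,
                Finset.insert_erase hch2]
            rw [hgw] at valg
            omega
          · rw [if_neg hd]
        have t2 : (∑ u ∈ rowT L d, if u ∈ gω.erase c then
            mcoeff (evm ((C.h2.erase c).erase d)) (gω.erase c)
              + mcoeff (evm ((C.h2.erase c).erase d)) ((gω.erase c).erase u) else 0) = 0 := by
          apply Finset.sum_eq_zero
          intro u hu
          obtain ⟨hud, huh2, -⟩ := C.rowTc_lic hL hdh2 hu
          by_cases hug : u ∈ gω.erase c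
          · rw [if_pos hug, k1', zero_add, mcoeff_evm, if_neg]
            intro heq
            apply notOvd2
            right
            have hgw : gω = insert u (C.h2.erase d) := by
              rw [← Finset.insert_erase hcg, ← Finset.insert_erase hug, ← heq,
                Finset.insert_comm, hic]
            refine ⟨C.h2.erase d, d, u, Finset.notMem_erase _ _, fun hm => huh2 (Finset.mem_of_mem_erase hm), hud, (Finset.insert_erase hdh2).symm, hgw⟩
          · rw [if_neg hug]
        rw [t1, t2, k1', mul_zero, add_zero, add_zero]
      -- Z3 : inner coefficient at gω.erase t vanishes (t a target of row c)
      have hz_et : ∀ t ∈ rowT L c, t ∈ gω →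
          mcoeff (L.act (evm (C.h2.erase c))) (gω.erase t) = 0 := by
        intro t ht htg
        obtain ⟨htc, hth2, hlic_t⟩ := C.rowTc_lic hL hch2 ht
        rw [hinner (gω.erase t)]
        have k1' : mcoeff (evm ((C.h2.erase c).erase d)) (gω.erase t) = 0 := by
          rw [mcoeff_evm, if_neg]
          intro heq
          apply SUB
          intro i hi
          rw [← Finset.insert_erase htg, ← heq] at hi
          rcases Finset.mem_insert.1 hi with h | h
          · subst h; exact fun hmem => hth2 (Finset.mem_sdiff.1 hmem).1
          · exact hBnotE2 i h
        have t1 : (if d ∈ gω.erase t then mcoeff (evm ((C.h2.erase c).erase d)) (gω.erase t)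
            + mcoeff (evm ((C.h2.erase c).erase d)) ((gω.erase t).erase d) else 0) = 0 := by
          by_cases hd : d ∈ gω.erase t
          · rw [if_pos hd, k1', zero_add, mcoeff_evm, if_neg]
            intro heq
            apply gnot2
            have hgw : gω = insert t (C.h2.erase c) := by
              rw [← Finset.insert_erase htg, ← Finset.insert_erase hd, ← heq, hid]
            rw [hgw]
            exact C.P2_sub_O2 hlic_t
          · rw [if_neg hd]
        have t2 : (∑ u ∈ rowT L d, if u ∈ gω.erase t then
            mcoeff (evm ((C.h2.erase c).erase d)) (gω.erase t)
              + mcoeff (evm ((C.h2.erase c).erase d)) ((gω.erase t).erase u) else 0) = 0 := by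
          apply Finset.sum_eq_zero
          intro u hu
          obtain ⟨hud, huh2, -⟩ := C.rowTc_lic hL hdh2 hu
          by_cases hug : u ∈ gω.erase t
          · rw [if_pos hug, k1', zero_add, mcoeff_evm, if_neg]
            intro heq
            apply SUB
            intro i hi
            rw [← Finset.insert_erase htg, ← Finset.insert_erase hug, ← heq] at hi
            rcases Finset.mem_insert.1 hi with h | h
            · subst h; exact fun hmem => hth2 (Finset.mem_sdiff.1 hmem).1
            · rcases Finset.mem_insert.1 h with h' | h'
              · subst h'; exact fun hmem => huh2 (Finset.mem_sdiff.1 hmem).1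
              · exact hBnotE2 i h'
          · rw [if_neg hug]
        rw [t1, t2, k1', mul_zero, add_zero, add_zero]
      -- outer assembly
      rw [mcoeff_act_split L C.h2 c hch2 gω]
      have o1 : (if c ∈ gω then mcoeff (L.act (evm (C.h2.erase c))) gω
          + mcoeff (L.act (evm (C.h2.erase c))) (gω.erase c) else 0) = 0 := by
        by_cases hcg : c ∈ gω
        · rw [if_pos hcg, hz_gw, hz_ec hcg, add_zero]
        · rw [if_neg hcg]
      have o2 : (∑ t ∈ rowT L c, if t ∈ gω then mcoeff (L.act (evm (C.h2.erase c))) gω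
          + mcoeff (L.act (evm (C.h2.erase c))) (gω.erase t) else 0) = 0 := by
        apply Finset.sum_eq_zero
        intro t ht
        by_cases htg : t ∈ gω
        · rw [if_pos htg, hz_gw, hz_et t ht htg, add_zero]
        · rw [if_neg htg]
      rw [o1, o2, hz_gw, mul_zero, add_zero, add_zero]
end

section
/- For every (A,b) ∈ LTA(n,2)_{h2}^{h1}, every g ∈ W, and every f ∈ (O_{h2}∖O_{h1}) ∩ D, the coefficient of g in (A,b)·f vanishes: ⟨(A,b)·f⟩_g = 0. -/
open Finset

variable {n : ℕ}

lemma key_vanish {n : ℕ} (C : Setup n) (L : LTA n) (hL : C.Mem L)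
    (f g : Mon n) (j : Fin n) (hjK : j ∈ C.h1 ∩ C.h2) (hjf : j ∉ f) (hjg : j ∈ g) :
    mcoeff (L.act (evm f)) g = 0 := by
  have hAj : ∀ i : Fin n, i ≠ j → L.A i j = 0 := by
    intro i hij
    rcases lt_or_gt_of_ne hij with h | h
    · exact L.lower i j h
    · by_contra hA
      rcases hL.1 i j h hA with ⟨f', _, q, hsq, htq, hh, hfq⟩ | ⟨f', _, q, hsq, htq, hh, hfq⟩
      · have hj1 : j ∈ C.h1 := (Finset.mem_inter.mp hjK).1
        rw [hh, Finset.mem_insert] at hj1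
        rcases hj1 with h' | h'
        · exact hij h'.symm
        · exact htq h'
      · have hj2 : j ∈ C.h2 := (Finset.mem_inter.mp hjK).2
        rw [hh, Finset.mem_insert] at hj2
        rcases hj2 with h' | h'
        · exact hij h'.symm
        · exact htq h'
  have hact : ∀ x : Pt n, L.act (evm f) (x + Pi.single j 1) = L.act (evm f) x := by
    intro x
    unfold LTA.act evm LTA.actPt
    apply Finset.prod_congr rfl
    intro i hi
    have hij : i ≠ j := fun h => hjf (h ▸ hi)
    simp [Matrix.mulVec_add, Matrix.mulVec_single, hAj i hij]
  have hsingle : (Pi.single j 1 : Pt n) + Pi.single j 1 = 0 := by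
    funext k
    by_cases hk : k = j <;> simp [Pi.single_apply, hk] <;> decide
  unfold mcoeff
  apply Finset.sum_involution (fun x _ => x + Pi.single j 1)
  · intro x hx
    rw [hact x]
    have : L.act (evm f) x + L.act (evm f) x = 2 * L.act (evm f) x := by ring
    rw [this]
    simp [show (2 : ZMod 2) = 0 by decide]
  · intro x hx hne
    intro hcontra
    have := congrFun hcontra j
    simp at this
  · intro x hx
    rw [add_assoc, hsingle, add_zero]
  · intro x hx
    simp only [Finset.mem_filter, Finset.mem_univ, true_and] at hx ⊢
    intro i hig
    have hij : i ≠ j := fun h => hig (h ▸ hjg)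
    simp [Pi.single_apply, hij, hx i hig]

/-- for `(A,b) ∈ LTA(n,2)_{h2}^{h1}`, `g ∈ W` and
`f ∈ (O_{h2}∖O_{h1}) ∩ D`, the coefficient `⟨(A,b)·f⟩_g` vanishes. -/
theorem stmt16 {n : ℕ} (C : Setup n) (L : LTA n) (hL : C.Mem L)
    (g : Mon n) (hg : g ∈ C.W)
    (f : Mon n) (hf : f ∈ (C.O2 \ C.O1) ∩ C.D) :
    mcoeff (L.act (evm f)) g = 0 := by
  obtain ⟨hgW, L', hL', p, hp, hcoeff⟩ := hg
  -- h1 ∩ h2 ⊆ p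
  have hKp : C.h1 ∩ C.h2 ⊆ p := by
    by_contra hK
    exact hp.2 ⟨Or.inl hp.1.1, hK⟩
  -- h1 ∩ h2 ⊆ g
  have hKg : C.h1 ∩ C.h2 ⊆ g := by
    intro j hj
    by_contra hjg
    exact hcoeff (key_vanish C L' hL' g p j hj hjg (hKp hj))
  -- f ∈ D : ∃ j ∈ h1 ∩ h2, j ∉ f
  obtain ⟨j, hjK, hjf⟩ := Finset.not_subset.mp hf.2.2
  exact key_vanish C L hL f g j hjK hjf (hKg hjK)
end
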